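/- arXiv:1312.2469 — 3 statements merged into one kernel-verified Lean document; each statement's English description precedes it below -/
import Mathlib

section
/- Let f be an invertible element of the Banach algebra ℓ¹(Γ, ℝ) with f ∈ ℤ[Γ]. Then the left ideal ℤ[Γ]·f contains a lopsided element, i.e., there exists h ∈ ℤ[Γ] such that hf is lopsided. -/
open scoped BigOperators

/-- Convolution of two real-valued functions on a group. -/
noncomputable def conv {Γ : Type*} [Group Γ] (f w : Γ → ℝ) : Γ → ℝ :=
  fun γ => ∑' δ : Γ, f δ * w (δ⁻¹ * γ)

/-- The identity element of the convolution algebra: the point mass at `1`. -/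
noncomputable def deltaOne {Γ : Type*} [Group Γ] [DecidableEq Γ] : Γ → ℝ :=
  fun γ => if γ = 1 then 1 else 0

/-- An element of a group ring is lopsided if one coefficient dominates the sum of the
absolute values of all the others. -/
def Lopsided {Γ : Type*} [Group Γ] [DecidableEq Γ] (g : MonoidAlgebra ℤ Γ) : Prop :=
  ∃ γ₀ : Γ, ∑ γ ∈ g.coeff.support.erase γ₀, |g.coeff γ| < |g.coeff γ₀|

/-- Translating a finite sum of absolute values of coefficients of `f` is bounded by the
total ℓ¹ norm of `f`. -/
lemma sum_abs_translate {Γ : Type*} [Group Γ] [DecidableEq Γ] (f : MonoidAlgebra ℤ Γ)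
    (δ : Γ) (T : Finset Γ) :
    ∑ γ ∈ T, |((f.coeff (δ⁻¹ * γ) : ℤ) : ℝ)| ≤ ∑ γ ∈ f.coeff.support, |((f.coeff γ : ℤ) : ℝ)| := by
  have hinj : ∀ a ∈ T, ∀ b ∈ T, δ⁻¹ * a = δ⁻¹ * b → a = b := by
    intro a _ b _ hab
    exact mul_left_cancel hab
  have h1 : ∑ x ∈ T.image (fun γ => δ⁻¹ * γ), |((f.coeff x : ℤ) : ℝ)|
      = ∑ γ ∈ T, |((f.coeff (δ⁻¹ * γ) : ℤ) : ℝ)| :=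
    Finset.sum_image hinj
  rw [← h1]
  set I := T.image (fun γ => δ⁻¹ * γ) with hI
  have h2 : ∑ x ∈ I, |((f.coeff x : ℤ) : ℝ)| = ∑ x ∈ I ∩ f.coeff.support, |((f.coeff x : ℤ) : ℝ)| := by
    refine (Finset.sum_subset (Finset.inter_subset_left) ?_).symm
    intro x hx hnx
    have : x ∉ f.coeff.support := fun hxs => hnx (Finset.mem_inter.2 ⟨hx, hxs⟩)
    simp [Finsupp.notMem_support_iff.1 this]
  rw [h2]
  exact Finset.sum_le_sum_of_subset_of_nonneg Finset.inter_subset_right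
    (fun x _ _ => abs_nonneg _)

set_option maxHeartbeats 1000000 in
/-- If `f ∈ ℤ[Γ]` is invertible in `ℓ¹(Γ, ℝ)`, then the left ideal `ℤ[Γ]·f`
contains a lopsided element. -/
theorem exists_lopsided_of_invertible {Γ : Type*} [Group Γ] [Countable Γ] [Infinite Γ]
    [DecidableEq Γ] (f : MonoidAlgebra ℤ Γ)
    (hinv : ∃ w : Γ → ℝ, Summable w ∧
      conv (fun γ => (f.coeff γ : ℝ)) w = deltaOne ∧
      conv w (fun γ => (f.coeff γ : ℝ)) = deltaOne) :
    ∃ h : MonoidAlgebra ℤ Γ, Lopsided (h * f) := by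
  classical
  obtain ⟨w, hw, hfw, hwf⟩ := hinv
  set F : ℝ := ∑ γ ∈ f.coeff.support, |((f.coeff γ : ℤ) : ℝ)| with hFdef
  -- f is nonzero
  have hf0 : f ≠ 0 := by
    rintro rfl
    have h1 := congrFun hfw 1
    simp [conv, deltaOne] at h1
  have hFpos : 0 < F := by
    have hne : f.coeff.support.Nonempty := Finsupp.support_nonempty_iff.2 (by simpa using hf0)
    refine Finset.sum_pos (fun γ hγ => ?_) hne
    have : f.coeff γ ≠ 0 := Finsupp.mem_support_iff.1 hγ
    have : ((f.coeff γ : ℤ) : ℝ) ≠ 0 := by exact_mod_cast this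
    exact abs_pos.2 this
  have hFbound : ∀ x : Γ, |((f.coeff x : ℤ) : ℝ)| ≤ F := by
    intro x
    by_cases hx : x ∈ f.coeff.support
    · exact Finset.single_le_sum (f := fun γ => |((f.coeff γ : ℤ) : ℝ)|) (fun γ _ => abs_nonneg _) hx
    · simp [Finsupp.notMem_support_iff.1 hx]
      exact le_of_lt hFpos
  have hwabs : Summable fun δ => |w δ| := hw.abs
  -- choose a finite set S with small tail
  have hε : (0 : ℝ) < 1 / (4 * F) := by positivity
  obtain ⟨S, hS⟩ : ∃ S : Finset Γ,
      dist (∑ δ ∈ S, |w δ|) (∑' δ, |w δ|) < 1 / (4 * F) :=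
    (hwabs.hasSum.eventually (Metric.ball_mem_nhds _ hε)).exists
  have htail : ∑' δ : {x // x ∉ S}, |w (δ : Γ)| < 1 / (4 * F) := by
    have hsplit := Summable.sum_add_tsum_subtype_compl hwabs S
    have h2 : ∑' δ : {x // x ∉ S}, |w (δ : Γ)|
        = (∑' δ, |w δ|) - ∑ δ ∈ S, |w δ| := by linarith
    rw [h2]
    calc (∑' δ, |w δ|) - ∑ δ ∈ S, |w δ|
          ≤ abs ((∑ δ ∈ S, |w δ|) - ∑' δ, |w δ|) := by
          rw [abs_sub_comm]; exact le_abs_self _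
      _ < 1 / (4 * F) := by rwa [Real.dist_eq] at hS
  -- the integer q
  set Fz : ℤ := ∑ γ ∈ f.coeff.support, |f.coeff γ| with hFz
  have hFcast : (Fz : ℝ) = F := by
    rw [hFz, hFdef]; push_cast; rfl
  set q : ℤ := 2 * Fz * S.card + 1 with hq
  have hqR : (2 : ℝ) * F * S.card < q := by
    rw [hq]; push_cast; rw [hFcast]; linarith
  have hqpos : (0 : ℝ) < q := by
    have : (0:ℝ) ≤ 2 * F * S.card := by positivity
    linarith
  -- the approximating integer element h
  set h : MonoidAlgebra ℤ Γ := MonoidAlgebra.ofCoeff <| Finsupp.onFinset S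
      (fun γ => if γ ∈ S then round ((q : ℝ) * w γ) else 0)
      (by intro γ hγ; by_contra hc; simp [hc] at hγ) with hhdef
  have hhval : ∀ γ, h.coeff γ = if γ ∈ S then round ((q : ℝ) * w γ) else 0 := fun _ => rfl
  -- the error function
  set e : Γ → ℝ := fun δ => (h.coeff δ : ℝ) - q * w δ with hedef
  have hsh : Summable fun δ => ((h.coeff δ : ℤ) : ℝ) := by
    apply summable_of_ne_finset_zero (s := S)
    intro δ hδ
    rw [hhval δ, if_neg hδ]
    norm_num
  have hse : Summable e := hsh.sub (hw.mul_left _)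
  have hseabs : Summable fun δ => |e δ| := hse.abs
  set E : ℝ := ∑' δ, |e δ| with hEdef
  -- bound on E
  have hEbound : E ≤ (S.card : ℝ) / 2 + (q : ℝ) * ∑' δ : {x // x ∉ S}, |w (δ : Γ)| := by
    have hsplit := Summable.sum_add_tsum_subtype_compl hseabs S
    have h1 : ∑ δ ∈ S, |e δ| ≤ (S.card : ℝ) / 2 := by
      have hb : ∀ δ ∈ S, |e δ| ≤ 1 / 2 := by
        intro δ hδ
        have hδ' : h.coeff δ = round ((q : ℝ) * w δ) := by rw [hhval δ, if_pos hδ]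
        have he : e δ = ((round ((q : ℝ) * w δ) : ℤ) : ℝ) - (q : ℝ) * w δ := by
          rw [hedef]; simp [hδ']
        rw [he, abs_sub_comm]
        exact abs_sub_round _
      calc ∑ δ ∈ S, |e δ| ≤ ∑ δ ∈ S, (1:ℝ)/2 := Finset.sum_le_sum hb
        _ = (S.card : ℝ) / 2 := by rw [Finset.sum_const, nsmul_eq_mul]; ring
    have h2 : ∑' δ : {x // x ∉ S}, |e (δ : Γ)|
        = (q : ℝ) * ∑' δ : {x // x ∉ S}, |w (δ : Γ)| := by
      rw [← tsum_mul_left]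
      apply tsum_congr
      rintro ⟨δ, hδ⟩
      have h0 : h.coeff δ = 0 := by rw [hhval δ, if_neg hδ]
      have he : e δ = -((q : ℝ) * w δ) := by simp [hedef, h0]
      rw [he, abs_neg, abs_mul, abs_of_pos hqpos]
    rw [hEdef, ← hsplit, h2]
    linarith
  have hEF : E * F < (q : ℝ) / 2 := by
    set t : ℝ := ∑' δ : {x // x ∉ S}, |w (δ : Γ)| with ht
    have h1 : E * F ≤ ((S.card : ℝ) / 2 + (q : ℝ) * t) * F :=
      mul_le_mul_of_nonneg_right hEbound hFpos.le
    have h2 : ((S.card : ℝ) / 2 + (q : ℝ) * t) * F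
        = (S.card : ℝ) * F / 2 + (q : ℝ) * (t * F) := by ring
    have h3 : t * F < 1 / 4 := by
      have := mul_lt_mul_of_pos_right htail hFpos
      have heq : 1 / (4 * F) * F = 1 / 4 := by field_simp
      rwa [heq] at this
    have h4 : (q : ℝ) * (t * F) < (q : ℝ) * (1 / 4) :=
      mul_lt_mul_of_pos_left h3 hqpos
    have h5 : (S.card : ℝ) * F / 2 < (q : ℝ) / 4 := by linarith
    linarith
  -- summability of the convolution terms
  have hswf : ∀ γ : Γ, Summable fun δ => w δ * ((f.coeff (δ⁻¹ * γ) : ℤ) : ℝ) := by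
    intro γ
    apply Summable.of_abs
    apply Summable.of_nonneg_of_le (fun δ => abs_nonneg _)
      (fun δ => ?_) (hwabs.mul_right F)
    rw [abs_mul]
    exact mul_le_mul_of_nonneg_left (hFbound _) (abs_nonneg _)
  have hshf : ∀ γ : Γ, Summable fun δ => ((h.coeff δ : ℤ) : ℝ) * ((f.coeff (δ⁻¹ * γ) : ℤ) : ℝ) := by
    intro γ
    apply summable_of_ne_finset_zero (s := S)
    intro δ hδ
    rw [hhval δ, if_neg hδ]
    norm_num
  have hsef : ∀ γ : Γ, Summable fun δ => e δ * ((f.coeff (δ⁻¹ * γ) : ℤ) : ℝ) := by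
    intro γ
    have : (fun δ => e δ * ((f.coeff (δ⁻¹ * γ) : ℤ) : ℝ))
        = fun δ => ((h.coeff δ : ℤ) : ℝ) * ((f.coeff (δ⁻¹ * γ) : ℤ) : ℝ)
          - (q : ℝ) * (w δ * ((f.coeff (δ⁻¹ * γ) : ℤ) : ℝ)) := by
      funext δ; rw [hedef]; ring
    rw [this]
    exact (hshf γ).sub ((hswf γ).mul_left _)
  -- key identity
  have hkey : ∀ γ : Γ, (((h * f).coeff γ : ℤ) : ℝ) - (q : ℝ) * deltaOne γ
      = ∑' δ, e δ * ((f.coeff (δ⁻¹ * γ) : ℤ) : ℝ) := by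
    intro γ
    have hmul : (((h * f).coeff γ : ℤ) : ℝ)
        = ∑ δ ∈ h.coeff.support, ((h.coeff δ : ℤ) : ℝ) * ((f.coeff (δ⁻¹ * γ) : ℤ) : ℝ) := by
      rw [MonoidAlgebra.coeff_mul_apply_left]
      rw [Finsupp.sum]
      push_cast
      rfl
    have htsum1 : (∑' δ, ((h.coeff δ : ℤ) : ℝ) * ((f.coeff (δ⁻¹ * γ) : ℤ) : ℝ))
        = ∑ δ ∈ h.coeff.support, ((h.coeff δ : ℤ) : ℝ) * ((f.coeff (δ⁻¹ * γ) : ℤ) : ℝ) := by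
      apply tsum_eq_sum
      intro δ hδ
      rw [Finsupp.notMem_support_iff.1 hδ]
      norm_num
    have hconv : (q : ℝ) * deltaOne γ
        = ∑' δ, (q : ℝ) * (w δ * ((f.coeff (δ⁻¹ * γ) : ℤ) : ℝ)) := by
      rw [tsum_mul_left]
      congr 1
      rw [← hwf]
      rfl
    rw [hmul, ← htsum1, hconv]
    rw [← Summable.tsum_sub (hshf γ) ((hswf γ).mul_left _)]
    apply tsum_congr
    intro δ
    rw [hedef]
    ring
  -- the key estimate over any finite set
  have hest : ∀ T : Finset Γ,
      ∑ γ ∈ T, |∑' δ, e δ * ((f.coeff (δ⁻¹ * γ) : ℤ) : ℝ)| ≤ E * F := by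
    intro T
    have habs : ∀ γ : Γ, Summable fun δ => |e δ * ((f.coeff (δ⁻¹ * γ) : ℤ) : ℝ)| := by
      intro γ
      apply Summable.of_nonneg_of_le (fun δ => abs_nonneg _)
        (fun δ => ?_) (hseabs.mul_right F)
      rw [abs_mul]
      exact mul_le_mul_of_nonneg_left (hFbound _) (abs_nonneg _)
    have h1 : ∀ γ ∈ T, |∑' δ, e δ * ((f.coeff (δ⁻¹ * γ) : ℤ) : ℝ)|
        ≤ ∑' δ, |e δ * ((f.coeff (δ⁻¹ * γ) : ℤ) : ℝ)| := by
      intro γ _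
      have hs : Summable fun δ => ‖e δ * ((f.coeff (δ⁻¹ * γ) : ℤ) : ℝ)‖ := by
        simpa only [Real.norm_eq_abs] using habs γ
      have hn := norm_tsum_le_tsum_norm hs
      simpa only [Real.norm_eq_abs] using hn
    calc ∑ γ ∈ T, |∑' δ, e δ * ((f.coeff (δ⁻¹ * γ) : ℤ) : ℝ)|
        ≤ ∑ γ ∈ T, ∑' δ, |e δ * ((f.coeff (δ⁻¹ * γ) : ℤ) : ℝ)| := Finset.sum_le_sum h1
      _ = ∑' δ, ∑ γ ∈ T, |e δ * ((f.coeff (δ⁻¹ * γ) : ℤ) : ℝ)| :=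
          (Summable.tsum_finsetSum (fun γ _ => habs γ)).symm
      _ = ∑' δ, |e δ| * ∑ γ ∈ T, |((f.coeff (δ⁻¹ * γ) : ℤ) : ℝ)| := by
          apply tsum_congr
          intro δ
          rw [Finset.mul_sum]
          apply Finset.sum_congr rfl
          intro γ _
          rw [abs_mul]
      _ ≤ ∑' δ, |e δ| * F := by
          apply Summable.tsum_le_tsum
          · intro δ
            exact mul_le_mul_of_nonneg_left (sum_abs_translate f δ T) (abs_nonneg _)
          · apply Summable.of_nonneg_of_le
              (fun δ => mul_nonneg (abs_nonneg _)
                (Finset.sum_nonneg fun γ _ => abs_nonneg _))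
              (fun δ => mul_le_mul_of_nonneg_left (sum_abs_translate f δ T) (abs_nonneg _))
              (hseabs.mul_right F)
          · exact hseabs.mul_right F
      _ = E * F := tsum_mul_right
  -- conclude
  refine ⟨h, 1, ?_⟩
  set g : MonoidAlgebra ℤ Γ := h * f with hgdef
  set T : Finset Γ := g.coeff.support.erase 1 with hT
  have h1T : (1 : Γ) ∉ T := Finset.notMem_erase _ _
  have hsum : ∑ γ ∈ insert 1 T, |((g.coeff γ : ℤ) : ℝ) - (q : ℝ) * deltaOne γ| ≤ E * F := by
    calc ∑ γ ∈ insert 1 T, |((g.coeff γ : ℤ) : ℝ) - (q : ℝ) * deltaOne γ|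
        = ∑ γ ∈ insert 1 T, |∑' δ, e δ * ((f.coeff (δ⁻¹ * γ) : ℤ) : ℝ)| := by
          apply Finset.sum_congr rfl
          intro γ _
          rw [hkey γ]
      _ ≤ E * F := hest _
  rw [Finset.sum_insert h1T] at hsum
  have hd1 : deltaOne (1 : Γ) = 1 := by simp [deltaOne]
  have hsumT : ∑ γ ∈ T, |((g.coeff γ : ℤ) : ℝ) - (q : ℝ) * deltaOne γ|
      = ∑ γ ∈ T, |((g.coeff γ : ℤ) : ℝ)| := by
    apply Finset.sum_congr rfl
    intro γ hγ
    have hγ1 : γ ≠ 1 := Finset.ne_of_mem_erase hγ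
    simp [deltaOne, hγ1]
  rw [hsumT, hd1] at hsum
  have hA : ∑ γ ∈ T, |((g.coeff γ : ℤ) : ℝ)| < |((g.coeff 1 : ℤ) : ℝ)| := by
    have h6 := abs_sub_abs_le_abs_sub ((q : ℝ) * 1) (((g.coeff 1 : ℤ) : ℝ))
    rw [abs_sub_comm] at h6
    have h7 : |(q : ℝ) * 1| = (q : ℝ) := by rw [mul_one, abs_of_pos hqpos]
    rw [h7] at h6
    have h0 : (0:ℝ) ≤ ∑ γ ∈ T, |((g.coeff γ : ℤ) : ℝ)| :=
      Finset.sum_nonneg fun γ _ => abs_nonneg _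
    linarith [hEF, hsum, h6, abs_nonneg (((g.coeff 1 : ℤ) : ℝ) - (q : ℝ) * 1)]
  exact_mod_cast hA
end

section
/- Let n ≥ k ≥ 1 and p ≥ 1 be integers such that A(q) := [n choose k]_q · (1 − q)/(1 − q^p) is a polynomial in q. Then A(q) has nonnegative integer coefficients. -/
open Polynomial Finset

/-- The Gaussian (q-)binomial coefficient as a polynomial in `q`. -/
noncomputable def gaussBinom : ℕ → ℕ → Polynomial ℤ
  | _, 0 => 1
  | 0, _ + 1 => 0
  | n + 1, k + 1 => gaussBinom n k + Polynomial.X ^ (k + 1) * gaussBinom n (k + 1)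

lemma gb_k0 (n : ℕ) : gaussBinom n 0 = 1 := by cases n <;> rfl

lemma gb_zero : ∀ n k, n < k → gaussBinom n k = 0
  | _, 0, h => absurd h (Nat.not_lt_zero _)
  | 0, k + 1, _ => rfl
  | n + 1, k + 1, h => by
    rw [gaussBinom, gb_zero n k (by omega), gb_zero n (k+1) (by omega)]
    ring

lemma gb_pascal2 : ∀ n k, gaussBinom (n+1) (k+1) =
    Polynomial.X ^ (n - k) * gaussBinom n k + gaussBinom n (k+1)
  | 0, k => by
    cases k with
    | zero => simp [gaussBinom]
    | succ k => simp [gaussBinom, gb_zero 0 (k+1) (by omega)]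
  | n + 1, 0 => by
    conv_lhs => rw [show gaussBinom (n+2) 1 = gaussBinom (n+1) 0 + Polynomial.X ^ 1 * gaussBinom (n+1) 1 from rfl,
      gb_pascal2 n 0]
    rw [show gaussBinom (n+1) (0+1) = gaussBinom n 0 + Polynomial.X ^ 1 * gaussBinom n 1 from rfl]
    rw [gb_k0, gb_k0]
    have hX : (Polynomial.X : Polynomial ℤ) ^ 1 * Polynomial.X ^ (n - 0) = Polynomial.X ^ (n + 1 - 0) := by
      rw [← pow_add]; congr 1; omega
    linear_combination hX
  | n + 1, k + 1 => by
    conv_rhs => rw [show gaussBinom (n+1) (k+1) = gaussBinom n k + Polynomial.X ^ (k+1) * gaussBinom n (k+1) from rfl,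
      show gaussBinom (n+1) (k+2) = gaussBinom n (k+1) + Polynomial.X ^ (k+2) * gaussBinom n (k+2) from rfl]
    conv_lhs => rw [show gaussBinom (n+2) (k+2) = gaussBinom (n+1) (k+1) + Polynomial.X ^ (k+2) * gaussBinom (n+1) (k+2) from rfl,
      gb_pascal2 n k, gb_pascal2 n (k+1)]
    rw [show n + 1 - (k + 1) = n - k from by omega]
    rcases le_or_gt (k+1) n with h | h
    · have hX : (Polynomial.X : Polynomial ℤ) ^ (k+2) * Polynomial.X ^ (n - (k+1)) =
          Polynomial.X ^ (n - k) * Polynomial.X ^ (k+1) := by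
        rw [← pow_add, ← pow_add]; congr 1; omega
      linear_combination gaussBinom n (k+1) * hX
    · rw [gb_zero n (k+1) h]
      ring


noncomputable def Qpoly (n k : ℕ) : Polynomial ℤ :=
  ∑ S ∈ (Finset.range n).powersetCard k, Polynomial.X ^ (S.sum id)

lemma gb_count : ∀ n k, Polynomial.X ^ (k.choose 2) * gaussBinom n k = Qpoly n k := by
  intro n
  induction n with
  | zero =>
    intro k
    cases k with
    | zero => simp [Qpoly, gaussBinom]
    | succ k =>
      rw [gb_zero 0 (k+1) (by omega), Qpoly]
      rw [show Finset.range 0 = (∅ : Finset ℕ) from rfl,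
        Finset.powersetCard_eq_empty.2 (by simp)]
      simp
  | succ n ih =>
    intro k
    cases k with
    | zero => simp [Qpoly, gb_k0]

    | succ k =>
      have hsplit : Qpoly (n+1) (k+1) = Qpoly n (k+1) + Polynomial.X ^ n * Qpoly n k := by
        unfold Qpoly
        rw [Finset.range_add_one, Finset.powersetCard_succ_insert Finset.notMem_range_self]
        rw [Finset.sum_union]
        · congr 1
          rw [Finset.sum_image]
          · rw [Finset.mul_sum]
            apply Finset.sum_congr rfl
            intro S hS
            rw [Finset.mem_powersetCard] at hS
            have hn : n ∉ S := fun h => Finset.notMem_range_self (hS.1 h)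
            rw [Finset.sum_insert hn, ← pow_add]
            rfl
          · intro S hS T hT h
            rw [Finset.mem_coe, Finset.mem_powersetCard] at hS hT
            have hnS : n ∉ S := fun hh => Finset.notMem_range_self (hS.1 hh)
            have hnT : n ∉ T := fun hh => Finset.notMem_range_self (hT.1 hh)
            have := congrArg (fun U => Finset.erase U n) h
            simpa [Finset.erase_insert hnS, Finset.erase_insert hnT] using this
        · rw [Finset.disjoint_left]
          intro S hS hS'
          rw [Finset.mem_powersetCard] at hS
          obtain ⟨T, hT, rfl⟩ := Finset.mem_image.1 hS'
          exact Finset.notMem_range_self (hS.1 (Finset.mem_insert_self n T))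
      rw [hsplit, ← ih (k+1), ← ih k, gb_pascal2]
      rcases le_or_gt k n with h | h
      · have hX : (Polynomial.X : Polynomial ℤ) ^ ((k+1).choose 2) * Polynomial.X ^ (n - k) =
            Polynomial.X ^ n * Polynomial.X ^ (k.choose 2) := by
          rw [← pow_add, ← pow_add]; congr 1
          have hc : (k+1).choose 2 = k + k.choose 2 := by
            rw [Nat.choose_succ_succ, Nat.choose_one_right]
          omega
        linear_combination gaussBinom n k * hX
      · rw [gb_zero n k h]; ring

def AAset (n k s : ℕ) : Finset (Finset ℕ) :=
  ((Finset.range n).powersetCard k).filter (fun S => S.sum id = s)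

lemma coeff_gb (n k j : ℕ) :
    (gaussBinom n k).coeff j = ((AAset n k (j + k.choose 2)).card : ℤ) := by
  have h2 : (gaussBinom n k).coeff j = (Qpoly n k).coeff (j + k.choose 2) := by
    rw [← gb_count]
    exact (Polynomial.coeff_X_pow_mul (gaussBinom n k) (k.choose 2) j).symm
  rw [h2, Qpoly, Polynomial.finset_sum_coeff]
  simp only [Polynomial.coeff_X_pow]
  have hc : ∀ S ∈ (Finset.range n).powersetCard k,
      (if j + k.choose 2 = S.sum id then (1:ℤ) else 0)
        = (if S.sum id = j + k.choose 2 then (1:ℤ) else 0) := by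
    intro S _
    exact if_congr (by constructor <;> omega) rfl rfl
  rw [Finset.sum_congr rfl hc,
    Finset.sum_boole (p := fun S : Finset ℕ => S.sum id = j + k.choose 2)]
  rfl


lemma mem_AAset {n k s : ℕ} {S : Finset ℕ} :
    S ∈ AAset n k s ↔ (S ⊆ Finset.range n ∧ S.card = k ∧ S.sum id = s) := by
  unfold AAset
  simp [Finset.mem_powersetCard, and_assoc]

lemma minsum : ∀ (k : ℕ) (S : Finset ℕ), S.card = k → k.choose 2 ≤ S.sum id := by
  intro k
  induction k with
  | zero =>
    intro S h
    rw [show Nat.choose 0 2 = 0 from rfl]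
    exact Nat.zero_le _
  | succ k ih =>
    intro S h
    have hne : S.Nonempty := by
      rw [← Finset.card_pos]; omega
    set m := S.max' hne with hm
    have hsub : S ⊆ Finset.range (m+1) := by
      intro x hx
      rw [Finset.mem_range]
      exact Nat.lt_succ_of_le (Finset.le_max' S x hx)
    have hcard : k + 1 ≤ m + 1 := by
      calc k + 1 = S.card := h.symm
      _ ≤ (Finset.range (m+1)).card := Finset.card_le_card hsub
      _ = m + 1 := by rw [Finset.card_range]
    have herase : (S.erase m).card = k := by
      rw [Finset.card_erase_of_mem (S.max'_mem hne)]; omega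
    have hsum : (S.erase m).sum id + m = S.sum id :=
      Finset.sum_erase_add S id (S.max'_mem hne)
    have h1 := ih (S.erase m) herase
    have hc : (k+1).choose 2 = k + k.choose 2 := by
      rw [Nat.choose_succ_succ, Nat.choose_one_right]
    omega

lemma sum_le_AAset {n k s : ℕ} {S : Finset ℕ} (h : S ∈ AAset n k s) : s ≤ k * (n-1) := by
  rw [mem_AAset] at h
  obtain ⟨h1, h2, h3⟩ := h
  calc s = S.sum id := h3.symm
  _ ≤ ∑ _i ∈ S, (n-1) := Finset.sum_le_sum (fun i hi => by
      have := Finset.mem_range.1 (h1 hi); simp only [id_eq]; omega)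
  _ = k * (n-1) := by rw [Finset.sum_const, smul_eq_mul, h2]

lemma refl_mem {n k s : ℕ} {S : Finset ℕ} (h : S ∈ AAset n k s) :
    S.image (fun i => n - 1 - i) ∈ AAset n k (k * (n-1) - s) := by
  have hs := sum_le_AAset h
  rw [mem_AAset] at h ⊢
  obtain ⟨h1, h2, h3⟩ := h
  have hlt : ∀ i ∈ S, i ≤ n - 1 := fun i hi => by
    have := Finset.mem_range.1 (h1 hi); omega
  have hinj : Set.InjOn (fun i => n - 1 - i) S := by
    intro a ha b hb hab
    have := hlt a ha; have := hlt b hb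
    simp only at hab; omega
  refine ⟨?_, ?_, ?_⟩
  · intro x hx
    obtain ⟨i, hi, rfl⟩ := Finset.mem_image.1 hx
    have := Finset.mem_range.1 (h1 hi)
    rw [Finset.mem_range]; omega
  · rw [Finset.card_image_of_injOn hinj, h2]
  · rw [Finset.sum_image hinj]
    have : (∑ i ∈ S, (n - 1 - i)) + S.sum id = k * (n-1) := by
      rw [← Finset.sum_add_distrib]
      simp only [id_eq]
      have : ∀ i ∈ S, (n - 1 - i) + i = n - 1 := fun i hi => by
        have := hlt i hi; omega
      rw [Finset.sum_congr rfl this, Finset.sum_const, smul_eq_mul, h2]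
    simp only [id] at this h3 ⊢
    omega

lemma AA_symm {n k s : ℕ} (hs : s ≤ k * (n-1)) :
    (AAset n k s).card = (AAset n k (k * (n-1) - s)).card := by
  apply Finset.card_nbij' (fun S => S.image (fun i => n - 1 - i))
      (fun S => S.image (fun i => n - 1 - i))
  · intro S hS; exact refl_mem hS
  · intro S hS
    have := refl_mem hS
    rwa [show k * (n-1) - (k * (n-1) - s) = s from by omega] at this
  · intro S hS
    rw [Finset.mem_coe, mem_AAset] at hS
    beta_reduce
    rw [Finset.image_image]
    rw [show ((fun i => n - 1 - i) ∘ (fun i => n - 1 - i)) = fun i : ℕ => n - 1 - (n - 1 - i) from rfl]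
    ext x
    simp only [Finset.mem_image]
    constructor
    · rintro ⟨i, hi, rfl⟩
      have := Finset.mem_range.1 (hS.1 hi)
      rwa [show n - 1 - (n - 1 - i) = i from by omega]
    · intro hx
      refine ⟨x, hx, ?_⟩
      have := Finset.mem_range.1 (hS.1 hx)
      omega
  · intro S hS
    rw [Finset.mem_coe, mem_AAset] at hS
    beta_reduce
    rw [Finset.image_image]
    ext x
    simp only [Finset.mem_image, Function.comp]
    constructor
    · rintro ⟨i, hi, rfl⟩
      have := Finset.mem_range.1 (hS.1 hi)
      rwa [show n - 1 - (n - 1 - i) = i from by omega]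
    · intro hx
      refine ⟨x, hx, ?_⟩
      have := Finset.mem_range.1 (hS.1 hx)
      omega

lemma AA_empty {n k s : ℕ} (hs : k * (n-1) - k.choose 2 < s) : AAset n k s = ∅ := by
  by_contra h
  obtain ⟨S, hS⟩ := Finset.nonempty_iff_ne_empty.2 h
  have h1 := sum_le_AAset hS
  have h2 := refl_mem hS
  have h3 : k.choose 2 ≤ k * (n-1) - s := by
    rw [mem_AAset] at h2
    have := minsum k _ h2.2.1
    omega
  omega

lemma AA_nonempty {n k : ℕ} (hkn : k ≤ n) : (AAset n k (k.choose 2)).Nonempty := by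
  refine ⟨Finset.range k, ?_⟩
  rw [mem_AAset]
  refine ⟨Finset.range_subset_range.2 hkn, Finset.card_range k, ?_⟩
  rw [show (Finset.range k).sum id = ∑ i ∈ Finset.range k, i from rfl]
  rw [Finset.sum_range_id, Nat.choose_two_right]


noncomputable section

def al (n i : ℕ) : ℝ := Real.sqrt (((i+1) * (n-1-i) : ℕ) : ℝ)

def up (i : ℕ) (S : Finset ℕ) : Finset ℕ := insert (i+1) (S.erase i)
def dn (i : ℕ) (S : Finset ℕ) : Finset ℕ := insert i (S.erase (i+1))

def gi (i : ℕ) (f : Finset ℕ → ℝ) (S : Finset ℕ) : ℝ :=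
  if i+1 ∈ S ∧ i ∉ S then f (dn i S) else 0

def hi (i : ℕ) (f : Finset ℕ → ℝ) (S : Finset ℕ) : ℝ :=
  if i ∈ S ∧ i+1 ∉ S then f (up i S) else 0

def Eop (n : ℕ) (f : Finset ℕ → ℝ) (S : Finset ℕ) : ℝ :=
  ∑ i ∈ Finset.range n, al n i * gi i f S

def Fop (n : ℕ) (f : Finset ℕ → ℝ) (S : Finset ℕ) : ℝ :=
  ∑ i ∈ Finset.range n, al n i * hi i f S

lemma al_nonneg (n i : ℕ) : 0 ≤ al n i := Real.sqrt_nonneg _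

lemma al_sq (n i : ℕ) : (al n i)^2 = (((i+1) * (n-1-i) : ℕ) : ℝ) :=
  Real.sq_sqrt (by positivity)

lemma al_ne_zero_lt {n i : ℕ} (h : al n i ≠ 0) : i + 1 < n := by
  by_contra hc
  apply h
  unfold al
  have : n - 1 - i = 0 := by omega
  rw [this, Nat.mul_zero]
  simp

lemma up_dn {i : ℕ} {S : Finset ℕ} (h1 : i+1 ∈ S) (h2 : i ∉ S) : up i (dn i S) = S := by
  unfold up dn
  rw [Finset.erase_insert (by simp [Finset.mem_erase]; tauto), Finset.insert_erase h1]

lemma dn_up {i : ℕ} {S : Finset ℕ} (h1 : i ∈ S) (h2 : i+1 ∉ S) : dn i (up i S) = S := by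
  unfold up dn
  rw [Finset.erase_insert (by simp [Finset.mem_erase]; tauto), Finset.insert_erase h1]

lemma move_comm {i j : ℕ} (h1 : i ≠ j) (h2 : j ≠ i+1) (h3 : i ≠ j+1) (S : Finset ℕ) :
    insert (j+1) ((insert i (S.erase (i+1))).erase j) =
      insert i ((insert (j+1) (S.erase j)).erase (i+1)) := by
  have h4 : j+1 ≠ i+1 := by omega
  ext x
  simp only [Finset.mem_insert, Finset.mem_erase]
  by_cases e1 : x = i <;> by_cases e2 : x = j+1 <;> by_cases e3 : x = j <;>
    by_cases e4 : x = i+1 <;> simp_all <;> tauto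

lemma gi_hi_comm {i j : ℕ} (hij : i ≠ j) (f : Finset ℕ → ℝ) (S : Finset ℕ) :
    gi i (hi j f) S = hi j (gi i f) S := by
  unfold gi hi dn up
  rcases eq_or_ne j (i+1) with rfl | hji
  · split_ifs with h1 h2 h3 h4 <;>
      simp_all [Finset.mem_insert, Finset.mem_erase] <;> omega
  · rcases eq_or_ne i (j+1) with rfl | hij2
    · split_ifs with h1 h2 h3 h4 <;>
        simp_all [Finset.mem_insert, Finset.mem_erase] <;> omega
    · have hji' : i+1 ≠ j := fun h => hji h.symm
      have hij2' : j+1 ≠ i := fun h => hij2 h.symm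
      have hij'' : j ≠ i := fun h => hij h.symm
      split_ifs with h1 h2 h3 h4 <;>
        simp_all [Finset.mem_insert, Finset.mem_erase] <;>
        first
          | omega
          | (rw [move_comm hij hji hij2])
          | (rw [if_neg (by tauto)])
          | tauto

lemma gi_hi_diag (i : ℕ) (f : Finset ℕ → ℝ) (S : Finset ℕ) :
    gi i (hi i f) S - hi i (gi i f) S =
      ((if i+1 ∈ S then (1:ℝ) else 0) - (if i ∈ S then (1:ℝ) else 0)) * f S := by
  unfold gi hi
  beta_reduce
  by_cases h1 : i+1 ∈ S <;> by_cases h2 : i ∈ S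
  · rw [if_neg (show ¬(i+1 ∈ S ∧ i ∉ S) from by tauto),
      if_neg (show ¬(i ∈ S ∧ i+1 ∉ S) from by tauto), if_pos h1, if_pos h2]
    ring
  · rw [if_pos (show i+1 ∈ S ∧ i ∉ S from ⟨h1, h2⟩),
      if_pos (show i ∈ dn i S ∧ i+1 ∉ dn i S from by
        unfold dn; simp [Finset.mem_insert, Finset.mem_erase]),
      up_dn h1 h2, if_neg (show ¬(i ∈ S ∧ i+1 ∉ S) from by tauto),
      if_pos h1, if_neg h2]
    ring
  · rw [if_neg (show ¬(i+1 ∈ S ∧ i ∉ S) from by tauto),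
      if_pos (show i ∈ S ∧ i+1 ∉ S from ⟨h2, h1⟩),
      if_pos (show i+1 ∈ up i S ∧ i ∉ up i S from by
        unfold up; simp [Finset.mem_insert, Finset.mem_erase]),
      dn_up h2 h1, if_neg h1, if_pos h2]
    ring
  · rw [if_neg (show ¬(i+1 ∈ S ∧ i ∉ S) from by tauto),
      if_neg (show ¬(i ∈ S ∧ i+1 ∉ S) from by tauto), if_neg h1, if_neg h2]
    ring

lemma weight_sum {n : ℕ} {S : Finset ℕ} (hS : S ⊆ Finset.range n) :
    ∑ i ∈ Finset.range n, (al n i)^2 *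
        ((if i+1 ∈ S then (1:ℝ) else 0) - (if i ∈ S then (1:ℝ) else 0))
      = 2 * ((S.sum id : ℕ) : ℝ) + S.card - S.card * n := by
  have key : ∀ i ∈ Finset.range n, (al n i)^2 *
        ((if i+1 ∈ S then (1:ℝ) else 0) - (if i ∈ S then (1:ℝ) else 0))
      = (fun m => (((m * (n-m) : ℕ)) : ℝ) * (if m ∈ S then 1 else 0)) (i+1)
        - (((i+1) * (n-1-i) : ℕ) : ℝ) * (if i ∈ S then 1 else 0) := by
    intro i _
    rw [al_sq]
    have : (i+1) * (n-1-i) = (i+1) * (n-(i+1)) := by congr 1; omega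
    rw [mul_sub]
    congr 2
    rw [this]
  rw [Finset.sum_congr rfl key, Finset.sum_sub_distrib]
  set g : ℕ → ℝ := fun m => (((m * (n-m) : ℕ)) : ℝ) * (if m ∈ S then 1 else 0) with hg
  have h1 : ∑ i ∈ Finset.range n, g (i+1) = ∑ i ∈ Finset.range n, g i := by
    have h0 : g 0 = 0 := by simp [hg]
    have hn : g n = 0 := by simp [hg]
    have := Finset.sum_range_succ' g n
    rw [Finset.sum_range_succ] at this
    -- this : ∑ range n g + g n = ∑ range n (g (·+1)) + g 0
    rw [h0, hn] at this
    linarith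
  rw [h1, ← Finset.sum_sub_distrib]
  have key2 : ∀ i ∈ Finset.range n,
      g i - (((i+1) * (n-1-i) : ℕ) : ℝ) * (if i ∈ S then 1 else 0)
        = if i ∈ S then ((2*(i:ℝ)+1) - n) else 0 := by
    intro i hi
    rw [Finset.mem_range] at hi
    by_cases h : i ∈ S
    · rw [hg]
      simp only [h, if_pos]
      rw [Nat.cast_mul, Nat.cast_mul, Nat.cast_sub (show i ≤ n by omega),
        Nat.cast_sub (show i ≤ n-1 by omega), Nat.cast_sub (show 1 ≤ n by omega)]
      push_cast
      ring
    · simp [hg, h]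
  rw [Finset.sum_congr rfl key2, Finset.sum_ite_mem,
    Finset.inter_eq_right.mpr hS, Finset.sum_sub_distrib, Finset.sum_add_distrib,
    Finset.sum_const, ← Finset.mul_sum]
  rw [show ((S.sum id : ℕ) : ℝ) = ∑ i ∈ S, (i : ℝ) from by
    rw [Nat.cast_sum]; rfl]
  simp [nsmul_eq_mul]
  try ring

lemma gi_sum (i : ℕ) (n : ℕ) (h : ℕ → Finset ℕ → ℝ) (S : Finset ℕ) :
    gi i (fun T => ∑ j ∈ Finset.range n, h j T) S
      = ∑ j ∈ Finset.range n, gi i (h j) S := by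
  unfold gi
  split_ifs with hc
  · rfl
  · simp

lemma hi_sum (i : ℕ) (n : ℕ) (h : ℕ → Finset ℕ → ℝ) (S : Finset ℕ) :
    hi i (fun T => ∑ j ∈ Finset.range n, h j T) S
      = ∑ j ∈ Finset.range n, hi i (h j) S := by
  unfold hi
  split_ifs with hc
  · rfl
  · simp

lemma gi_smul (i : ℕ) (c : ℝ) (f : Finset ℕ → ℝ) (S : Finset ℕ) :
    gi i (fun T => c * f T) S = c * gi i f S := by
  unfold gi; split_ifs <;> simp

lemma hi_smul (i : ℕ) (c : ℝ) (f : Finset ℕ → ℝ) (S : Finset ℕ) :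
    hi i (fun T => c * f T) S = c * hi i f S := by
  unfold hi; split_ifs <;> simp

lemma commutatorEF {n : ℕ} (f : Finset ℕ → ℝ) {S : Finset ℕ} (hS : S ⊆ Finset.range n) :
    Eop n (Fop n f) S - Fop n (Eop n f) S
      = (2 * ((S.sum id : ℕ) : ℝ) + S.card - S.card * n) * f S := by
  have hE : Eop n (Fop n f) S
      = ∑ i ∈ Finset.range n, ∑ j ∈ Finset.range n, al n i * al n j * gi i (hi j f) S := by
    unfold Eop Fop
    apply Finset.sum_congr rfl
    intro i _
    rw [show (fun T => ∑ j ∈ Finset.range n, al n j * hi j f T)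
        = (fun T => ∑ j ∈ Finset.range n, (fun j T => al n j * hi j f T) j T) from rfl]
    rw [gi_sum, Finset.mul_sum]
    apply Finset.sum_congr rfl
    intro j _
    rw [show (fun T => al n j * hi j f T) = (fun T => al n j * (hi j f) T) from rfl, gi_smul]
    ring
  have hF : Fop n (Eop n f) S
      = ∑ i ∈ Finset.range n, ∑ j ∈ Finset.range n, al n i * al n j * hi j (gi i f) S := by
    unfold Eop Fop
    rw [Finset.sum_comm]
    apply Finset.sum_congr rfl
    intro j _
    rw [show (fun T => ∑ i ∈ Finset.range n, al n i * gi i f T)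
        = (fun T => ∑ i ∈ Finset.range n, (fun i T => al n i * gi i f T) i T) from rfl]
    rw [hi_sum, Finset.mul_sum]
    apply Finset.sum_congr rfl
    intro i _
    rw [show (fun T => al n i * gi i f T) = (fun T => al n i * (gi i f) T) from rfl, hi_smul]
    ring
  rw [hE, hF, ← Finset.sum_sub_distrib]
  have step : ∀ i ∈ Finset.range n,
      (∑ j ∈ Finset.range n, al n i * al n j * gi i (hi j f) S)
        - (∑ j ∈ Finset.range n, al n i * al n j * hi j (gi i f) S)
      = (al n i)^2 * ((if i+1 ∈ S then (1:ℝ) else 0) - (if i ∈ S then (1:ℝ) else 0)) * f S := by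
    intro i hir
    rw [← Finset.sum_sub_distrib]
    rw [Finset.sum_eq_single_of_mem i hir
      (fun j _ hji => by rw [gi_hi_comm (fun hh => hji hh.symm) f S]; ring)]
    rw [show al n i * al n i * gi i (hi i f) S - al n i * al n i * hi i (gi i f) S
        = al n i ^ 2 * (gi i (hi i f) S - hi i (gi i f) S) from by ring, gi_hi_diag]
    ring
  rw [Finset.sum_congr rfl step]
  rw [show (∑ i ∈ Finset.range n, (al n i)^2 *
      ((if i+1 ∈ S then (1:ℝ) else 0) - (if i ∈ S then (1:ℝ) else 0)) * f S)
    = (∑ i ∈ Finset.range n, (al n i)^2 *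
      ((if i+1 ∈ S then (1:ℝ) else 0) - (if i ∈ S then (1:ℝ) else 0))) * f S from by
    rw [Finset.sum_mul]]
  rw [weight_sum hS]

lemma adjoint (n : ℕ) (f g : Finset ℕ → ℝ) :
    ∑ S ∈ (Finset.range n).powerset, Eop n f S * g S
      = ∑ S ∈ (Finset.range n).powerset, f S * Fop n g S := by
  unfold Eop Fop
  have L1 : ∑ S ∈ (Finset.range n).powerset,
        (∑ i ∈ Finset.range n, al n i * gi i f S) * g S
      = ∑ i ∈ Finset.range n, ∑ S ∈ (Finset.range n).powerset,
          al n i * (gi i f S * g S) := by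
    rw [Finset.sum_comm]
    apply Finset.sum_congr rfl
    intro S _
    rw [Finset.sum_mul]
    exact Finset.sum_congr rfl fun i _ => by ring
  have L2 : ∑ S ∈ (Finset.range n).powerset,
        f S * (∑ i ∈ Finset.range n, al n i * hi i g S)
      = ∑ i ∈ Finset.range n, ∑ S ∈ (Finset.range n).powerset,
          al n i * (f S * hi i g S) := by
    rw [Finset.sum_comm]
    apply Finset.sum_congr rfl
    intro S _
    rw [Finset.mul_sum]
    exact Finset.sum_congr rfl fun i _ => by ring
  rw [L1, L2]
  apply Finset.sum_congr rfl
  intro i _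
  by_cases hal : al n i = 0
  · simp [hal]
  · have hin : i + 1 < n := al_ne_zero_lt hal
    rw [← Finset.mul_sum, ← Finset.mul_sum]
    congr 1
    rw [show (∑ S ∈ (Finset.range n).powerset, gi i f S * g S)
        = ∑ S ∈ (Finset.range n).powerset.filter (fun S => i+1 ∈ S ∧ i ∉ S),
            f (dn i S) * g S from by
      rw [Finset.sum_filter]
      exact Finset.sum_congr rfl fun S _ => by unfold gi; split_ifs <;> simp]
    rw [show (∑ S ∈ (Finset.range n).powerset, f S * hi i g S)
        = ∑ S ∈ (Finset.range n).powerset.filter (fun S => i ∈ S ∧ i+1 ∉ S),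
            f S * g (up i S) from by
      rw [Finset.sum_filter]
      exact Finset.sum_congr rfl fun S _ => by unfold hi; split_ifs <;> simp]
    apply Finset.sum_nbij' (dn i) (up i)
    · intro S hS
      rw [Finset.mem_filter, Finset.mem_powerset] at hS ⊢
      obtain ⟨hsub, hc1, hc2⟩ := hS
      refine ⟨?_, ?_, ?_⟩
      · intro x hx
        unfold dn at hx
        rw [Finset.mem_insert, Finset.mem_erase] at hx
        rcases hx with rfl | ⟨_, hx⟩
        · rw [Finset.mem_range]; omega
        · exact hsub hx
      · unfold dn; exact Finset.mem_insert_self _ _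
      · unfold dn
        rw [Finset.mem_insert, Finset.mem_erase]
        push_neg
        exact ⟨by omega, fun h => absurd rfl h⟩
    · intro S hS
      rw [Finset.mem_filter, Finset.mem_powerset] at hS ⊢
      obtain ⟨hsub, hc1, hc2⟩ := hS
      refine ⟨?_, ?_, ?_⟩
      · intro x hx
        unfold up at hx
        rw [Finset.mem_insert, Finset.mem_erase] at hx
        rcases hx with rfl | ⟨_, hx⟩
        · rw [Finset.mem_range]; omega
        · exact hsub hx
      · unfold up; exact Finset.mem_insert_self _ _
      · unfold up
        rw [Finset.mem_insert, Finset.mem_erase]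
        push_neg
        exact ⟨by omega, fun h => absurd rfl h⟩
    · intro S hS
      rw [Finset.mem_filter] at hS
      exact up_dn hS.2.1 hS.2.2
    · intro S hS
      rw [Finset.mem_filter] at hS
      exact dn_up hS.2.1 hS.2.2
    · intro S hS
      rw [Finset.mem_filter] at hS
      rw [up_dn hS.2.1 hS.2.2]

lemma up_mem {n k s i : ℕ} {T : Finset ℕ} (hT : T ∈ AAset n k s) (h1 : i ∈ T)
    (h2 : i+1 ∉ T) (h3 : i+1 < n) : up i T ∈ AAset n k (s+1) := by
  rw [mem_AAset] at hT ⊢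
  obtain ⟨hsub, hcard, hsum⟩ := hT
  have hins : i+1 ∉ T.erase i := fun h => h2 (Finset.mem_of_mem_erase h)
  refine ⟨?_, ?_, ?_⟩
  · intro x hx
    unfold up at hx
    rw [Finset.mem_insert, Finset.mem_erase] at hx
    rcases hx with rfl | ⟨_, hx⟩
    · rw [Finset.mem_range]; omega
    · exact hsub hx
  · unfold up
    rw [Finset.card_insert_of_notMem hins, Finset.card_erase_of_mem h1]
    have : 1 ≤ T.card := Finset.card_pos.mpr ⟨i, h1⟩
    omega
  · unfold up
    rw [Finset.sum_insert hins]
    have := Finset.sum_erase_add T id h1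
    simp only [id_eq] at this hsum ⊢
    omega

lemma Eop_supp {n k s : ℕ} {f : Finset ℕ → ℝ}
    (hf : ∀ S, f S ≠ 0 → S ∈ AAset n k s) {S : Finset ℕ} (h : Eop n f S ≠ 0) :
    S ∈ AAset n k (s+1) := by
  unfold Eop at h
  obtain ⟨i, _, hi0⟩ := Finset.exists_ne_zero_of_sum_ne_zero h
  have hal : al n i ≠ 0 := fun hh => hi0 (by rw [hh]; ring)
  have hgi : gi i f S ≠ 0 := fun hh => hi0 (by rw [hh]; ring)
  unfold gi at hgi
  by_cases hc : i+1 ∈ S ∧ i ∉ S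
  · rw [if_pos hc] at hgi
    have hdn := hf _ hgi
    have hup := up_mem hdn (Finset.mem_insert_self i _)
      (by unfold dn; rw [Finset.mem_insert, Finset.mem_erase]; push_neg
          exact ⟨by omega, fun h => absurd rfl h⟩) (al_ne_zero_lt hal)
    rwa [up_dn hc.1 hc.2] at hup
  · rw [if_neg hc] at hgi
    exact absurd rfl hgi

lemma Eop_vanish {n k s : ℕ} (hw : 2*s < k*(n-1)) (f : Finset ℕ → ℝ)
    (hf : ∀ S, f S ≠ 0 → S ∈ AAset n k s) (hz : ∀ S, Eop n f S = 0) :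
    ∀ S, f S = 0 := by
  have hn1 : 1 ≤ n := by by_contra hc; simp [show n = 0 from by omega] at hw
  have hA1 : ∑ S ∈ (Finset.range n).powerset, Eop n f S * Eop n f S
      = ∑ S ∈ (Finset.range n).powerset, f S * Fop n (Eop n f) S := adjoint n f (Eop n f)
  have hA2 : ∑ S ∈ (Finset.range n).powerset, Eop n (Fop n f) S * f S
      = ∑ S ∈ (Finset.range n).powerset, Fop n f S * Fop n f S := adjoint n (Fop n f) f
  have hC : ∀ S ∈ (Finset.range n).powerset,
      f S * (Eop n (Fop n f) S - Fop n (Eop n f) S)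
        = (2*(s:ℝ) + k - k*n) * (f S * f S) := by
    intro S hSmem
    rw [Finset.mem_powerset] at hSmem
    rw [commutatorEF f hSmem]
    by_cases hfS : f S = 0
    · rw [hfS]; ring
    · have := hf S hfS
      rw [mem_AAset] at this
      rw [this.2.2, this.2.1]
      ring
  have hX : (2*(s:ℝ) + k - k*n) * (∑ S ∈ (Finset.range n).powerset, f S * f S)
      = ∑ S ∈ (Finset.range n).powerset, Fop n f S * Fop n f S := by
    rw [Finset.mul_sum, ← Finset.sum_congr rfl hC]
    rw [show (∑ S ∈ (Finset.range n).powerset,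
          f S * (Eop n (Fop n f) S - Fop n (Eop n f) S))
        = (∑ S ∈ (Finset.range n).powerset, Eop n (Fop n f) S * f S)
          - (∑ S ∈ (Finset.range n).powerset, f S * Fop n (Eop n f) S) from by
      rw [← Finset.sum_sub_distrib]
      exact Finset.sum_congr rfl fun S _ => by ring]
    rw [hA2, ← hA1]
    rw [show (∑ S ∈ (Finset.range n).powerset, Eop n f S * Eop n f S) = 0 from
      Finset.sum_eq_zero fun S _ => by rw [hz S]; ring]
    ring
  have hneg : (2*(s:ℝ) + k - k*n) < 0 := by
    have : 2*s + k < k*n := by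
      have : k*(n-1) + k = k*n := by
        rw [← Nat.mul_succ]; congr 1; omega
      omega
    have := (Nat.cast_lt (α := ℝ)).mpr this
    push_cast at this ⊢
    linarith
  have hsum0 : ∑ S ∈ (Finset.range n).powerset, f S * f S = 0 := by
    by_contra hne
    have hpos : 0 < ∑ S ∈ (Finset.range n).powerset, f S * f S := by
      rcases lt_or_eq_of_le (Finset.sum_nonneg fun S _ => mul_self_nonneg (f S)) with h | h
      · exact h
      · exact absurd h.symm hne
    have hr : (2*(s:ℝ) + k - k*n) * (∑ S ∈ (Finset.range n).powerset, f S * f S) < 0 :=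
      mul_neg_of_neg_of_pos hneg hpos
    rw [hX] at hr
    exact absurd hr (not_lt.mpr (Finset.sum_nonneg fun S _ => mul_self_nonneg _))
  intro S
  by_cases hfS : f S = 0
  · exact hfS
  · exfalso
    have hSin : S ∈ (Finset.range n).powerset := by
      rw [Finset.mem_powerset]
      exact ((mem_AAset).mp (hf S hfS)).1
    have := (Finset.sum_eq_zero_iff_of_nonneg
      (fun S _ => mul_self_nonneg (f S))).mp hsum0 S hSin
    exact hfS (by nlinarith [this])

def extz (A : Finset (Finset ℕ)) (f : ↥A → ℝ) (S : Finset ℕ) : ℝ :=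
  if h : S ∈ A then f ⟨S, h⟩ else 0

lemma extz_add (A : Finset (Finset ℕ)) (f g : ↥A → ℝ) :
    extz A (f + g) = fun S => extz A f S + extz A g S := by
  funext S; unfold extz; split_ifs <;> simp

lemma extz_smul (A : Finset (Finset ℕ)) (c : ℝ) (f : ↥A → ℝ) :
    extz A (c • f) = fun S => c * extz A f S := by
  funext S; unfold extz; split_ifs <;> simp

lemma AA_unimodal {n k s : ℕ} (hw : 2*s < k*(n-1)) :
    (AAset n k s).card ≤ (AAset n k (s+1)).card := by
  classical
  have Eop_add : ∀ (u v : Finset ℕ → ℝ) S,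
      Eop n (fun T => u T + v T) S = Eop n u S + Eop n v S := by
    intro u v S
    unfold Eop gi
    rw [← Finset.sum_add_distrib]
    exact Finset.sum_congr rfl fun i _ => by split_ifs <;> ring
  have Eop_smul : ∀ (c : ℝ) (u : Finset ℕ → ℝ) S,
      Eop n (fun T => c * u T) S = c * Eop n u S := by
    intro c u S
    unfold Eop gi
    rw [Finset.mul_sum]
    exact Finset.sum_congr rfl fun i _ => by split_ifs <;> ring
  let T : (↥(AAset n k s) → ℝ) →ₗ[ℝ] (↥(AAset n k (s+1)) → ℝ) :=
    { toFun := fun f Sb => Eop n (extz (AAset n k s) f) Sb.1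
      map_add' := by
        intro f g
        funext Sb
        show Eop n (extz _ (f + g)) Sb.1 = Eop n (extz _ f) Sb.1 + Eop n (extz _ g) Sb.1
        rw [extz_add, Eop_add]
      map_smul' := by
        intro c f
        funext Sb
        show Eop n (extz _ (c • f)) Sb.1 = c * Eop n (extz _ f) Sb.1
        rw [extz_smul, Eop_smul] }
  have hker : ∀ f, T f = 0 → f = 0 := by
    intro f hTf
    have hsupp : ∀ S, extz (AAset n k s) f S ≠ 0 → S ∈ AAset n k s := by
      intro S hS
      by_cases h : S ∈ AAset n k s
      · exact h
      · unfold extz at hS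
        rw [dif_neg h] at hS
        exact absurd rfl hS
    have hz : ∀ S, Eop n (extz (AAset n k s) f) S = 0 := by
      intro S
      by_cases h : Eop n (extz (AAset n k s) f) S = 0
      · exact h
      · have hSB : S ∈ AAset n k (s+1) := Eop_supp hsupp h
        have := congrFun hTf ⟨S, hSB⟩
        exact absurd this h
    have hzero := Eop_vanish hw (extz (AAset n k s) f) hsupp hz
    funext Sa
    have := hzero Sa.1
    unfold extz at this
    rwa [dif_pos Sa.2] at this
  have hinj : Function.Injective T :=
    LinearMap.ker_eq_bot.mp (LinearMap.ker_eq_bot'.mpr hker)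
  have hle := LinearMap.finrank_le_finrank_of_injective hinj
  rw [Module.finrank_fintype_fun_eq_card, Module.finrank_fintype_fun_eq_card,
    Fintype.card_coe, Fintype.card_coe] at hle
  exact hle

end


/-- If `n ≥ k ≥ 1`, `p ≥ 1` and `A(q) = [n choose k]_q (1 − q)/(1 − q^p)` is a
polynomial, then `A(q)` has nonnegative integer coefficients. -/
theorem gaussBinom_quotient_nonneg (n k p : ℕ) (hk : 1 ≤ k) (hkn : k ≤ n) (hp : 1 ≤ p)
    (A : Polynomial ℤ)
    (hA : A * (1 - Polynomial.X ^ p) = gaussBinom n k * (1 - Polynomial.X)) :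
    ∀ j : ℕ, 0 ≤ A.coeff j := by
  set d := k * (n - k) with hd
  set G := gaussBinom n k with hG
  -- arithmetic facts
  have h2C : 2 * k.choose 2 = k * (k-1) := by
    rw [Nat.choose_two_right]
    exact Nat.mul_div_cancel' (even_iff_two_dvd.mp (by
      rcases Nat.even_or_odd k with h | h
      · exact h.mul_right _
      · exact (Nat.Odd.sub_odd h odd_one).mul_left _)) -- k even: k*(k-1) even; k odd: k-1 even
  have hkd : k * (n-1) = d + 2 * k.choose 2 := by
    have e1 : k*(n-1) + k = k*n := by rw [← Nat.mul_succ]; congr 1; omega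
    have e2 : k*(n-k) + k*k = k*n := by rw [← Nat.mul_add]; congr 1; omega
    have e3 : k*(k-1) + k = k*k := by rw [← Nat.mul_succ]; congr 1; omega
    omega
  -- coefficient facts
  have F1 : ∀ j, 0 ≤ G.coeff j := by
    intro j; rw [hG, coeff_gb]; positivity
  have F2 : ∀ j, 1 ≤ j → 2*(j-1) < d → G.coeff (j-1) ≤ G.coeff j := by
    intro j hj1 hj2
    rw [hG, coeff_gb, coeff_gb]
    have := AA_unimodal (n := n) (k := k) (s := (j-1) + k.choose 2) (by omega)
    rw [show (j - 1 + k.choose 2) + 1 = j + k.choose 2 from by omega] at this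
    exact_mod_cast this
  have F4 : ∀ j, d < j → G.coeff j = 0 := by
    intro j hj
    rw [hG, coeff_gb, AA_empty (by omega)]
    simp
  have F3 : ∀ j, j ≤ d → G.coeff j = G.coeff (d - j) := by
    intro j hj
    rw [hG, coeff_gb, coeff_gb]
    have := AA_symm (n := n) (k := k) (s := j + k.choose 2) (by omega)
    rw [show k * (n-1) - (j + k.choose 2) = (d - j) + k.choose 2 from by omega] at this
    exact_mod_cast this
  have F5 : ∀ m, d ≤ 2*m + 1 → G.coeff (m+1) ≤ G.coeff m := by
    intro m hm
    rcases le_or_gt m d with h | h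
    · rcases eq_or_lt_of_le h with heq | h'
      · rw [F4 (m+1) (by omega)]; exact F1 m
      · rw [F3 m (by omega), F3 (m+1) (by omega)]
        have := F2 (d - m) (by omega) (by omega)
        rw [show d - m - 1 = d - (m+1) from by omega] at this
        exact this
    · rw [F4 (m+1) (by omega), F4 m (by omega)]
  -- recurrence
  have F6 : ∀ m, A.coeff m - (if p ≤ m then A.coeff (m - p) else 0)
      = G.coeff m - (if 1 ≤ m then G.coeff (m - 1) else 0) := by
    intro m
    have h := congrArg (fun P => Polynomial.coeff P m) hA
    rw [mul_one_sub, mul_one_sub, Polynomial.coeff_sub, Polynomial.coeff_sub,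
      Polynomial.coeff_mul_X_pow'] at h
    have hGX : (G * Polynomial.X).coeff m = if 1 ≤ m then G.coeff (m-1) else 0 := by
      have hx : G * Polynomial.X = G * Polynomial.X ^ 1 := by rw [pow_one]
      rw [hx, Polynomial.coeff_mul_X_pow']
    rw [hGX] at h
    exact h
  -- degree bound
  rcases eq_or_ne A 0 with rfl | hA0
  · intro j; simp
  have hdegA : A.natDegree + p ≤ d + 1 := by
    have hGd : G.natDegree ≤ d := Polynomial.natDegree_le_iff_coeff_eq_zero.mpr
      fun N hN => F4 N hN
    have h1X : (1 - Polynomial.X : Polynomial ℤ).natDegree ≤ 1 := by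
      rw [show (1 - Polynomial.X : Polynomial ℤ) = -(Polynomial.X ^ 1 - Polynomial.C 1) from by
        simp]
      rw [Polynomial.natDegree_neg, Polynomial.natDegree_X_pow_sub_C]
    have hpX : (1 - Polynomial.X ^ p : Polynomial ℤ).natDegree = p := by
      rw [show (1 - Polynomial.X ^ p : Polynomial ℤ) = -(Polynomial.X ^ p - Polynomial.C 1) from by
        simp]
      rw [Polynomial.natDegree_neg, Polynomial.natDegree_X_pow_sub_C]
    have hne : (1 - Polynomial.X ^ p : Polynomial ℤ) ≠ 0 := by
      intro hc
      have := congrArg Polynomial.natDegree hc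
      rw [hpX] at this
      simp at this
      omega
    have hL : (A * (1 - Polynomial.X ^ p)).natDegree = A.natDegree + p := by
      rw [Polynomial.natDegree_mul hA0 hne, hpX]
    have hR : (G * (1 - Polynomial.X)).natDegree ≤ d + 1 :=
      le_trans (Polynomial.natDegree_mul_le) (by omega)
    calc A.natDegree + p = (A * (1 - Polynomial.X ^ p)).natDegree := hL.symm
      _ = (G * (1 - Polynomial.X)).natDegree := by rw [hA]
      _ ≤ d + 1 := hR
  have F7 : ∀ j, d + 1 < j + p → A.coeff j = 0 := by
    intro j hj
    exact Polynomial.coeff_eq_zero_of_natDegree_lt (by omega)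
  -- low induction
  have L1 : ∀ j, 2*j ≤ d+1 → 0 ≤ A.coeff j := by
    intro j
    induction j using Nat.strong_induction_on with
    | _ j ih =>
      intro hj
      have hrec := F6 j
      have hcc : (if 1 ≤ j then G.coeff (j-1) else 0) ≤ G.coeff j := by
        split_ifs with h1
        · exact F2 j h1 (by omega)
        · exact F1 j
      have haa : 0 ≤ (if p ≤ j then A.coeff (j - p) else 0) := by
        split_ifs with h1
        · exact ih (j - p) (by omega) (by omega)
        · rfl
      linarith
  -- high induction
  have L2 : ∀ m j, d + 1 < j + m * p → d + 2 ≤ 2*j → 0 ≤ A.coeff j := by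
    intro m
    induction m with
    | zero =>
      intro j hj _
      rw [F7 j (by omega)]
    | succ m ih =>
      intro j hj hj2
      rcases le_or_gt (j + p) (d + 1) with hle | hgt
      · have hrec := F6 (j + p)
        rw [if_pos (by omega), if_pos (by omega),
          show j + p - p = j from by omega] at hrec
        have h1 : 0 ≤ A.coeff (j + p) := ih (j + p) (by
          have : m * p + p = (m+1) * p := by ring
          omega) (by omega)
        have h2 : G.coeff (j + p) ≤ G.coeff (j + p - 1) := by
          have := F5 (j + p - 1) (by omega)
          rwa [show j + p - 1 + 1 = j + p from by omega] at this
        linarith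
      · rw [F7 j (by omega)]
  intro j
  rcases le_or_gt (2*j) (d+1) with h | h
  · exact L1 j h
  · exact L2 (d+2) j (by
      have : d + 2 ≤ (d+2) * p := Nat.le_mul_of_pos_right _ (by omega)
      omega) (by omega)
end

section
/- Let n ≥ 2k ≥ 2 and let p be the largest prime factor of C(n,k). Then the ℓ¹-norm of the coefficient sequence of the polynomial [n choose k]_q · (1 − q) is at most (2/p)·C(n,k) ≤ (2/k)·C(n,k). -/
open scoped BigOperators
open Polynomial

/-- The ℓ¹-norm of an integer polynomial. -/
noncomputable def l1normP (P : Polynomial ℤ) : ℤ := ∑ j ∈ P.support, |P.coeff j|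

namespace GBAux
open Finset

/-- k-subsets of `range n`. -/
def pc (n k : ℕ) : Finset (Finset ℕ) := Finset.powersetCard k (Finset.range n)

lemma mem_pc {n k : ℕ} {A : Finset ℕ} : A ∈ pc n k ↔ A ⊆ Finset.range n ∧ A.card = k :=
  Finset.mem_powersetCard

/-- the (reflected) sum statistic -/
def stt (n : ℕ) (A : Finset ℕ) : ℕ := ∑ a ∈ A, (n - 1 - a)

/-- the plain sum statistic -/
def WW (A : Finset ℕ) : ℕ := ∑ a ∈ A, a

def sg (k : ℕ) : ℕ := ∑ i ∈ Finset.range k, i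

lemma sg_succ (k : ℕ) : sg (k + 1) = sg k + k := Finset.sum_range_succ _ _

noncomputable def GS (n k : ℕ) : Polynomial ℤ := ∑ A ∈ pc n k, X ^ stt n A

def uu (n k m : ℕ) : ℕ := ((pc n k).filter fun A => stt n A = m).card

def uW (n k m : ℕ) : ℕ := ((pc n k).filter fun A => WW A = m).card

lemma stt_succ {n : ℕ} {A : Finset ℕ} (hA : A ⊆ Finset.range n) :
    stt (n + 1) A = stt n A + A.card := by
  unfold stt
  rw [Finset.card_eq_sum_ones, ← Finset.sum_add_distrib]
  refine Finset.sum_congr rfl fun a ha => ?_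
  have := Finset.mem_range.1 (hA ha)
  omega

lemma GS_succ (n k : ℕ) :
    GS (n + 1) (k + 1) = X ^ k * GS n k + X ^ (k + 1) * GS n (k + 1) := by
  unfold GS pc
  rw [Finset.range_add_one, Finset.powersetCard_succ_insert Finset.notMem_range_self]
  rw [Finset.sum_union]
  · rw [add_comm]
    congr 1
    · -- sum over image (insert n) (powersetCard k (range n))
      rw [Finset.sum_image]
      · rw [Finset.mul_sum]
        refine Finset.sum_congr rfl fun B hB => ?_
        obtain ⟨hBsub, hBcard⟩ := Finset.mem_powersetCard.1 hB
        have hnB : n ∉ B := fun h => Finset.notMem_range_self (hBsub h)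
        have : stt (n + 1) (insert n B) = stt n B + k := by
          unfold stt
          rw [Finset.sum_insert hnB]
          have h1 : n + 1 - 1 - n = 0 := by omega
          rw [h1, zero_add]
          have : ∑ a ∈ B, (n + 1 - 1 - a) = ∑ a ∈ B, (n - 1 - a + 1) := by
            refine Finset.sum_congr rfl fun a ha => ?_
            have := Finset.mem_range.1 (hBsub ha)
            omega
          rw [this, Finset.sum_add_distrib]
          simp [hBcard]
        rw [this, pow_add, mul_comm]
      · intro B hB C hC hBC
        obtain ⟨hBsub, _⟩ := Finset.mem_powersetCard.1 hB
        obtain ⟨hCsub, _⟩ := Finset.mem_powersetCard.1 hC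
        have hnB : n ∉ B := fun h => Finset.notMem_range_self (hBsub h)
        have hnC : n ∉ C := fun h => Finset.notMem_range_self (hCsub h)
        have := congrArg (fun s => Finset.erase s n) hBC
        simpa [Finset.erase_insert, hnB, hnC] using this
    · rw [Finset.mul_sum]
      refine Finset.sum_congr rfl fun A hA => ?_
      obtain ⟨hAsub, hAcard⟩ := Finset.mem_powersetCard.1 hA
      rw [stt_succ hAsub, hAcard, pow_add, mul_comm]
  · -- disjoint
    rw [Finset.disjoint_left]
    intro A hA hA'
    obtain ⟨hAsub, _⟩ := Finset.mem_powersetCard.1 hA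
    obtain ⟨B, hB, rfl⟩ := Finset.mem_image.1 hA'
    exact Finset.notMem_range_self (hAsub (Finset.mem_insert_self n B))

lemma gauss_model : ∀ n k : ℕ, gaussBinom n k * X ^ sg k = GS n k := by
  intro n
  induction n with
  | zero =>
    intro k
    cases k with
    | zero => simp [gaussBinom, GS, pc, sg, stt]
    | succ k =>
      show (0 : Polynomial ℤ) * X ^ sg (k+1) = _
      simp only [GS, pc]
      rw [show Finset.powersetCard (k+1) (Finset.range 0) = ∅ from rfl]
      simp
  | succ n ih =>
    intro k
    cases k with
    | zero => simp [gaussBinom, GS, pc, sg, stt]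
    | succ k =>
      show (gaussBinom n k + X ^ (k+1) * gaussBinom n (k+1)) * X ^ sg (k+1) = _
      rw [GS_succ, ← ih k, ← ih (k+1), sg_succ, pow_add]
      ring

lemma GS_coeff (n k m : ℕ) : (GS n k).coeff m = (uu n k m : ℤ) := by
  unfold GS uu
  rw [Polynomial.finset_sum_coeff]
  rw [Finset.card_filter]
  push_cast
  refine Finset.sum_congr rfl fun A _ => ?_
  rw [Polynomial.coeff_X_pow]
  by_cases h : stt n A = m <;> simp [h, eq_comm, Ne.symm]

lemma stt_le {n k : ℕ} {A : Finset ℕ} (h : A ∈ pc n k) : stt n A ≤ k * (n - 1) := by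
  obtain ⟨hsub, hcard⟩ := mem_pc.1 h
  calc stt n A ≤ ∑ _a ∈ A, (n - 1) := Finset.sum_le_sum fun a _ => Nat.sub_le _ _
  _ = k * (n - 1) := by rw [Finset.sum_const, hcard, smul_eq_mul]

lemma uu_vanish {n k m : ℕ} (h : k * (n - 1) < m) : uu n k m = 0 := by
  unfold uu
  rw [Finset.card_eq_zero, Finset.filter_eq_empty_iff]
  intro A hA heq
  exact absurd heq (by have := stt_le hA; omega)

lemma stt_add_WW {n k : ℕ} {A : Finset ℕ} (h : A ∈ pc n k) :
    stt n A + WW A = k * (n - 1) := by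
  obtain ⟨hsub, hcard⟩ := mem_pc.1 h
  unfold stt WW
  rw [← Finset.sum_add_distrib]
  calc (∑ a ∈ A, (n - 1 - a + a)) = ∑ _a ∈ A, (n-1) := by
        refine Finset.sum_congr rfl fun a ha => ?_
        have := Finset.mem_range.1 (hsub ha)
        omega
  _ = k * (n-1) := by rw [Finset.sum_const, hcard, smul_eq_mul]


/-- reflection of a subset of `range n` -/
def refl (n : ℕ) (A : Finset ℕ) : Finset ℕ := A.image fun a => n - 1 - a

lemma refl_mem {n k : ℕ} {A : Finset ℕ} (h : A ∈ pc n k) : refl n A ∈ pc n k := by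
  obtain ⟨hsub, hcard⟩ := mem_pc.1 h
  have hn : ∀ a ∈ A, a < n := fun a ha => Finset.mem_range.1 (hsub ha)
  refine mem_pc.2 ⟨?_, ?_⟩
  · intro b hb
    obtain ⟨a, ha, rfl⟩ := Finset.mem_image.1 hb
    exact Finset.mem_range.2 (by have := hn a ha; omega)
  · unfold refl
    rw [Finset.card_image_of_injOn, hcard]
    intro a ha b hb hab
    simp only at hab
    have := hn a ha; have := hn b hb
    omega

lemma refl_refl {n k : ℕ} {A : Finset ℕ} (h : A ∈ pc n k) : refl n (refl n A) = A := by
  obtain ⟨hsub, _⟩ := mem_pc.1 h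
  have hn : ∀ a ∈ A, a < n := fun a ha => Finset.mem_range.1 (hsub ha)
  unfold refl
  rw [Finset.image_image]
  have : Finset.image ((fun a => n - 1 - a) ∘ fun a => n - 1 - a) A = Finset.image id A := by
    refine Finset.image_congr ?_
    intro a ha
    have := hn a ha
    simp only [Function.comp_apply, id_eq]
    omega
  rw [this, Finset.image_id]

lemma WW_refl {n k : ℕ} {A : Finset ℕ} (h : A ∈ pc n k) : WW (refl n A) = stt n A := by
  obtain ⟨hsub, _⟩ := mem_pc.1 h
  have hn : ∀ a ∈ A, a < n := fun a ha => Finset.mem_range.1 (hsub ha)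
  unfold WW refl stt
  rw [Finset.sum_image]
  intro a ha b hb hab
  simp only at hab
  have := hn a ha; have := hn b hb
  omega

lemma stt_refl {n k : ℕ} {A : Finset ℕ} (h : A ∈ pc n k) : stt n (refl n A) = WW A := by
  have h1 := stt_add_WW (refl_mem h)
  have h2 := stt_add_WW h
  have h3 := WW_refl h
  omega

/-- counts with the two statistics agree -/
lemma uu_eq_uW (n k m : ℕ) : uu n k m = uW n k m := by
  unfold uu uW
  refine Finset.card_nbij' (fun A => refl n A) (fun A => refl n A) ?_ ?_ ?_ ?_
  · intro A hA
    obtain ⟨hA1, hA2⟩ := Finset.mem_filter.1 hA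
    exact Finset.mem_filter.2 ⟨refl_mem hA1, by rw [WW_refl hA1]; exact hA2⟩
  · intro A hA
    obtain ⟨hA1, hA2⟩ := Finset.mem_filter.1 hA
    exact Finset.mem_filter.2 ⟨refl_mem hA1, by rw [stt_refl hA1]; exact hA2⟩
  · intro A hA
    exact refl_refl (Finset.mem_filter.1 hA).1
  · intro A hA
    exact refl_refl (Finset.mem_filter.1 hA).1

/-- symmetry of the level counts -/
lemma uu_symm {n k m : ℕ} (hm : m ≤ k * (n-1)) : uu n k m = uu n k (k * (n-1) - m) := by
  unfold uu
  refine Finset.card_nbij' (fun A => refl n A) (fun A => refl n A) ?_ ?_ ?_ ?_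
  · intro A hA
    obtain ⟨hA1, hA2⟩ := Finset.mem_filter.1 hA
    refine Finset.mem_filter.2 ⟨refl_mem hA1, ?_⟩
    rw [stt_refl hA1]
    have := stt_add_WW hA1
    omega
  · intro A hA
    obtain ⟨hA1, hA2⟩ := Finset.mem_filter.1 hA
    refine Finset.mem_filter.2 ⟨refl_mem hA1, ?_⟩
    rw [stt_refl hA1]
    have h2 := stt_add_WW hA1
    have h3 := stt_le hA1
    omega
  · intro A hA
    exact refl_refl (Finset.mem_filter.1 hA).1
  · intro A hA
    exact refl_refl (Finset.mem_filter.1 hA).1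

/-- anticoncentration: `k·u(m) ≤ C(n, k-1)` via `(A, a) ↦ A.erase a`. -/
lemma anti (n k m : ℕ) (hk : 1 ≤ k) : k * uu n k m ≤ n.choose (k - 1) := by
  classical
  set s := (pc n k).filter (fun A => stt n A = m) with hs
  have hcard : k * uu n k m = (s.sigma fun A => (A : Finset ℕ)).card := by
    rw [Finset.card_sigma]
    unfold uu
    rw [← hs, mul_comm]
    rw [Finset.card_eq_sum_ones s, Finset.sum_mul, one_mul]
    refine Finset.sum_congr rfl fun A hA => ?_
    exact ((mem_pc.1 (Finset.mem_filter.1 hA).1).2).symm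
  have hch : n.choose (k-1) = (Finset.powersetCard (k-1) (Finset.range n)).card := by
    rw [Finset.card_powersetCard, Finset.card_range]
  rw [hcard, hch]
  refine Finset.card_le_card_of_injOn (fun x => x.1.erase x.2) ?_ ?_
  · rintro ⟨A, a⟩ hAa
    simp only [Finset.coe_sigma, Set.mem_sigma_iff, Finset.mem_coe] at hAa
    simp only [Finset.mem_coe]
    obtain ⟨hA, ha⟩ := hAa
    obtain ⟨hA1, hA2⟩ := Finset.mem_filter.1 hA
    obtain ⟨hsub, hcardA⟩ := mem_pc.1 hA1
    refine Finset.mem_powersetCard.2 ⟨fun x hx => hsub (Finset.mem_of_mem_erase hx), ?_⟩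
    rw [Finset.card_erase_of_mem ha, hcardA]
  · rintro ⟨A, a⟩ hAa ⟨B, b⟩ hBb hEq
    simp only [Finset.coe_sigma, Set.mem_sigma_iff, Finset.mem_coe] at hAa hBb
    obtain ⟨hA, ha⟩ := hAa
    obtain ⟨hB, hb⟩ := hBb
    obtain ⟨hA1, hA2⟩ := Finset.mem_filter.1 hA
    obtain ⟨hB1, hB2⟩ := Finset.mem_filter.1 hB
    simp only at hEq
    have haA : a < n := Finset.mem_range.1 ((mem_pc.1 hA1).1 ha)
    have hbB : b < n := Finset.mem_range.1 ((mem_pc.1 hB1).1 hb)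
    have hA' : A = insert a (A.erase a) := (Finset.insert_erase ha).symm
    have hB' : B = insert b (B.erase b) := (Finset.insert_erase hb).symm
    have hsttA : stt n A = (n - 1 - a) + stt n (A.erase a) := by
      conv_lhs => rw [hA']
      unfold stt
      rw [Finset.sum_insert (Finset.notMem_erase a A)]
    have hsttB : stt n B = (n - 1 - b) + stt n (B.erase b) := by
      conv_lhs => rw [hB']
      unfold stt
      rw [Finset.sum_insert (Finset.notMem_erase b B)]
    have hab : a = b := by
      rw [hA2] at hsttA
      rw [hB2] at hsttB
      rw [hEq] at hsttA
      omega
    have hAB : A = B := by rw [hA', hB', hEq, hab]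
    simp [hAB, hab]

/-! ### Equidistribution of subset sums mod p -/

def rho (n p x : ℕ) : ℕ :=
  if x < p * (n / p) then (if (x + 1) % p = 0 then x + 1 - p else x + 1) else x

lemma pq_le (n p : ℕ) : p * (n / p) ≤ n := by
  have := Nat.mod_add_div n p; omega

lemma rho_lt_pq {n p x : ℕ} (hp : 0 < p) (hx : x < p * (n / p)) :
    rho n p x < p * (n / p) := by
  unfold rho
  rw [if_pos hx]
  by_cases h : (x + 1) % p = 0
  · rw [if_pos h]
    have h1 : p ∣ x + 1 := Nat.dvd_of_mod_eq_zero h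
    have h2 := Nat.le_of_dvd (by omega) h1
    omega
  · rw [if_neg h]
    rcases Nat.lt_or_ge (x + 1) (p * (n / p)) with h' | h'
    · exact h'
    · exfalso
      apply h
      have hxe : x + 1 = p * (n / p) := by omega
      rw [hxe]
      exact Nat.mul_mod_right p _

lemma rho_fix {n p x : ℕ} (hx : ¬ x < p * (n / p)) : rho n p x = x := if_neg hx

lemma rho_lt {n p x : ℕ} (hp : 0 < p) (hx : x < n) : rho n p x < n := by
  by_cases h : x < p * (n / p)
  · exact lt_of_lt_of_le (rho_lt_pq hp h) (pq_le n p)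
  · rw [rho_fix h]; exact hx

lemma rho_injOn {n p x y : ℕ} (hp : 0 < p) (hx : x < n) (hy : y < n)
    (hEq : rho n p x = rho n p y) : x = y := by
  by_cases hx1 : x < p * (n / p) <;> by_cases hy1 : y < p * (n / p)
  · have hEq' : (if (x+1) % p = 0 then x + 1 - p else x + 1)
        = (if (y+1) % p = 0 then y + 1 - p else y + 1) := by
      unfold rho at hEq
      rw [if_pos hx1, if_pos hy1] at hEq
      exact hEq
    by_cases hw1 : (x+1) % p = 0 <;> by_cases hw2 : (y+1) % p = 0
    · rw [if_pos hw1, if_pos hw2] at hEq'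
      have d1 := Nat.le_of_dvd (by omega) (Nat.dvd_of_mod_eq_zero hw1)
      have d2 := Nat.le_of_dvd (by omega) (Nat.dvd_of_mod_eq_zero hw2)
      omega
    · rw [if_pos hw1, if_neg hw2] at hEq'
      have d1 := Nat.le_of_dvd (by omega) (Nat.dvd_of_mod_eq_zero hw1)
      exfalso
      apply hw2
      have hxy : x + 1 = (y + 1) + p := by omega
      have h2 := Nat.add_mod_right (y+1) p
      rw [← hxy] at h2
      omega
    · rw [if_neg hw1, if_pos hw2] at hEq'
      have d2 := Nat.le_of_dvd (by omega) (Nat.dvd_of_mod_eq_zero hw2)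
      exfalso
      apply hw1
      have hxy : y + 1 = (x + 1) + p := by omega
      have h2 := Nat.add_mod_right (x+1) p
      rw [← hxy] at h2
      omega
    · rw [if_neg hw1, if_neg hw2] at hEq'
      omega
  · have h1 := rho_lt_pq hp hx1
    have h2 := rho_fix hy1
    omega
  · have h1 := rho_lt_pq hp hy1
    have h2 := rho_fix hx1
    omega
  · rw [rho_fix hx1, rho_fix hy1] at hEq
    exact hEq

/-- one rotation step on subsets -/
def rhoS (n p : ℕ) (A : Finset ℕ) : Finset ℕ := A.image (rho n p)

lemma rhoS_mem {n k p : ℕ} (hp : 0 < p) {A : Finset ℕ} (hA : A ∈ pc n k) :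
    rhoS n p A ∈ pc n k := by
  obtain ⟨hsub, hcard⟩ := mem_pc.1 hA
  have hb : ∀ a ∈ A, a < n := fun a ha => Finset.mem_range.1 (hsub ha)
  refine mem_pc.2 ⟨?_, ?_⟩
  · intro y hy
    obtain ⟨x, hx, rfl⟩ := Finset.mem_image.1 hy
    exact Finset.mem_range.2 (rho_lt hp (hb x hx))
  · rw [rhoS, Finset.card_image_of_injOn, hcard]
    intro x hx y hy
    exact rho_injOn hp (hb x hx) (hb y hy)

lemma rhoS_inj {n k p : ℕ} (hp : 0 < p) {A B : Finset ℕ} (hA : A ∈ pc n k)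
    (hB : B ∈ pc n k) (hEq : rhoS n p A = rhoS n p B) : A = B := by
  obtain ⟨hsubA, _⟩ := mem_pc.1 hA
  obtain ⟨hsubB, _⟩ := mem_pc.1 hB
  ext x
  constructor
  · intro hx
    have : rho n p x ∈ rhoS n p B := hEq ▸ Finset.mem_image_of_mem _ hx
    obtain ⟨y, hy, hxy⟩ := Finset.mem_image.1 this
    have : y = x := rho_injOn hp (Finset.mem_range.1 (hsubB hy))
      (Finset.mem_range.1 (hsubA hx)) hxy
    exact this ▸ hy
  · intro hx
    have : rho n p x ∈ rhoS n p A := hEq ▸ Finset.mem_image_of_mem _ hx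
    obtain ⟨y, hy, hxy⟩ := Finset.mem_image.1 this
    have : y = x := rho_injOn hp (Finset.mem_range.1 (hsubA hy))
      (Finset.mem_range.1 (hsubB hx)) hxy
    exact this ▸ hy

/-- number of elements in the "partial block" -/
def eP (n p : ℕ) (A : Finset ℕ) : ℕ := (A.filter fun x => ¬ x < p * (n / p)).card

lemma eP_rhoS {n k p : ℕ} (hp : 0 < p) {A : Finset ℕ} (hA : A ∈ pc n k) :
    eP n p (rhoS n p A) = eP n p A := by
  obtain ⟨hsub, _⟩ := mem_pc.1 hA
  unfold eP
  congr 1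
  ext y
  simp only [Finset.mem_filter, rhoS, Finset.mem_image]
  constructor
  · rintro ⟨⟨x, hx, rfl⟩, hy⟩
    by_cases h : x < p * (n / p)
    · exact absurd (rho_lt_pq hp h) hy
    · rw [rho_fix h] at hy ⊢
      exact ⟨hx, hy⟩
  · rintro ⟨hy1, hy2⟩
    exact ⟨⟨y, hy1, rho_fix hy2⟩, hy2⟩

lemma eP_le {n k p : ℕ} (hp : 0 < p) {A : Finset ℕ} (hA : A ∈ pc n k) :
    eP n p A ≤ n % p := by
  obtain ⟨hsub, _⟩ := mem_pc.1 hA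
  unfold eP
  have hsub2 : (A.filter fun x => ¬ x < p * (n / p)) ⊆ Finset.Ico (p * (n/p)) n := by
    intro x hx
    obtain ⟨hx1, hx2⟩ := Finset.mem_filter.1 hx
    exact Finset.mem_Ico.2 ⟨by omega, Finset.mem_range.1 (hsub hx1)⟩
  calc (A.filter fun x => ¬ x < p * (n / p)).card ≤ (Finset.Ico (p * (n/p)) n).card :=
        Finset.card_le_card hsub2
  _ = n - p * (n/p) := Nat.card_Ico _ _
  _ = n % p := by have := Nat.mod_add_div n p; omega

lemma WW_rhoS {n k p : ℕ} (hp : 0 < p) {A : Finset ℕ} (hA : A ∈ pc n k) :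
    ((WW (rhoS n p A) : ZMod p)) = (WW A : ZMod p) + (k - eP n p A : ℕ) := by
  obtain ⟨hsub, hcard⟩ := mem_pc.1 hA
  have hb : ∀ a ∈ A, a < n := fun a ha => Finset.mem_range.1 (hsub ha)
  have hfc : k - eP n p A = (A.filter fun x => x < p * (n / p)).card := by
    have := Finset.card_filter_add_card_filter_not (s := A)
      (p := fun x => x < p * (n / p))
    unfold eP
    omega
  unfold WW rhoS
  rw [Finset.sum_image (fun x hx y hy => rho_injOn hp (hb x hx) (hb y hy))]
  rw [hfc]
  push_cast
  have step : ∀ x ∈ A, ((rho n p x : ℕ) : ZMod p)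
      = (x : ZMod p) + (if x < p * (n / p) then 1 else 0) := by
    intro x hx
    by_cases h : x < p * (n / p)
    · rw [if_pos h]
      unfold rho
      rw [if_pos h]
      by_cases hw : (x + 1) % p = 0
      · rw [if_pos hw]
        have h1 : p ∣ x + 1 := Nat.dvd_of_mod_eq_zero hw
        have h2 := Nat.le_of_dvd (by omega) h1
        rw [Nat.cast_sub h2]
        push_cast
        simp [ZMod.natCast_self]
      · rw [if_neg hw]; push_cast; ring
    · rw [if_neg h, rho_fix h, add_zero]
  rw [Finset.sum_congr rfl step, Finset.sum_add_distrib]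
  congr 1
  rw [Finset.sum_boole]

/-- t-fold rotation -/
lemma iter_facts {n k p : ℕ} (hp : 0 < p) {A : Finset ℕ} (hA : A ∈ pc n k) (t : ℕ) :
    (rhoS n p)^[t] A ∈ pc n k ∧ eP n p ((rhoS n p)^[t] A) = eP n p A ∧
    ((WW ((rhoS n p)^[t] A) : ZMod p)) = (WW A : ZMod p) + t * (k - eP n p A : ℕ) := by
  induction t with
  | zero => simp [hA]
  | succ t ih =>
    obtain ⟨h1, h2, h3⟩ := ih
    rw [Function.iterate_succ_apply']
    refine ⟨rhoS_mem hp h1, ?_, ?_⟩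
    · rw [eP_rhoS hp h1, h2]
    · rw [WW_rhoS hp h1, h3, h2]
      push_cast
      ring

lemma iter_inj {n k p : ℕ} (hp : 0 < p) {A B : Finset ℕ} (hA : A ∈ pc n k)
    (hB : B ∈ pc n k) (t : ℕ) (hEq : (rhoS n p)^[t] A = (rhoS n p)^[t] B) : A = B := by
  induction t with
  | zero => simpa using hEq
  | succ t ih =>
    rw [Function.iterate_succ_apply', Function.iterate_succ_apply'] at hEq
    exact ih (rhoS_inj hp (iter_facts hp hA t).1 (iter_facts hp hB t).1 hEq)

/-- class counts -/
def Ncl (n k p : ℕ) (r : ZMod p) : ℕ :=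
  ((pc n k).filter fun A => (WW A : ZMod p) = r).card

lemma Ncl_le (n k p : ℕ) (hp : p.Prime) (hkp : k < p) (hb : n % p < k) (r s : ZMod p) :
    Ncl n k p r ≤ Ncl n k p s := by
  classical
  haveI : Fact p.Prime := ⟨hp⟩
  have hp0 : 0 < p := hp.pos
  unfold Ncl
  set tfun : Finset ℕ → ℕ := fun A => ((s - r) * (((k - eP n p A : ℕ) : ZMod p))⁻¹).val
    with htfun
  have hfc_ne : ∀ {A : Finset ℕ}, A ∈ pc n k → ((k - eP n p A : ℕ) : ZMod p) ≠ 0 := by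
    intro A hA
    have h1 := eP_le hp0 hA
    have h2 : 0 < k - eP n p A := by omega
    have h3 : k - eP n p A < p := by omega
    intro hcontra
    rw [ZMod.natCast_eq_zero_iff] at hcontra
    have := Nat.le_of_dvd h2 hcontra
    omega
  refine Finset.card_le_card_of_injOn (fun A => (rhoS n p)^[tfun A] A) ?_ ?_
  · intro A hA
    obtain ⟨hA1, hA2⟩ := Finset.mem_filter.1 hA
    obtain ⟨h1, _, h3⟩ := iter_facts hp0 hA1 (tfun A)
    refine Finset.mem_filter.2 ⟨h1, ?_⟩
    rw [h3, hA2, htfun]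
    rw [ZMod.natCast_val, ZMod.cast_id]
    rw [mul_assoc, inv_mul_cancel₀ (hfc_ne hA1)]
    ring
  · intro A hA B hB hEq
    simp only [Finset.coe_filter, Set.mem_setOf_eq] at hA hB
    obtain ⟨hA1, hA2⟩ := hA
    obtain ⟨hB1, hB2⟩ := hB
    simp only at hEq
    have heq2 : eP n p A = eP n p B := by
      have h1 := (iter_facts hp0 hA1 (tfun A)).2.1
      have h2 := (iter_facts hp0 hB1 (tfun B)).2.1
      rw [hEq] at h1
      omega
    have ht : tfun A = tfun B := by rw [htfun]; simp [heq2]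
    rw [ht] at hEq
    exact iter_inj hp0 hA1 hB1 _ hEq

/-- main equidistribution bound -/
lemma equi (n k p m : ℕ) (hp : p.Prime) (hkp : k < p) (hb : n % p < k) :
    p * uu n k m ≤ n.choose k := by
  classical
  haveI : Fact p.Prime := ⟨hp⟩
  have hp0 : 0 < p := hp.pos
  have hsum : ∑ r : ZMod p, Ncl n k p r = n.choose k := by
    unfold Ncl
    rw [← Finset.card_eq_sum_card_fiberwise (f := fun A => (WW A : ZMod p))
      (t := Finset.univ) (fun A _ => Finset.mem_univ _)]
    unfold pc
    rw [Finset.card_powersetCard, Finset.card_range]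
  have huu : uu n k m ≤ Ncl n k p (m : ZMod p) := by
    rw [uu_eq_uW]
    unfold uW Ncl
    refine Finset.card_le_card ?_
    intro A hA
    obtain ⟨hA1, hA2⟩ := Finset.mem_filter.1 hA
    exact Finset.mem_filter.2 ⟨hA1, by rw [hA2]⟩
  calc p * uu n k m ≤ p * Ncl n k p (m : ZMod p) := Nat.mul_le_mul_left p huu
  _ = ∑ _r : ZMod p, Ncl n k p (m : ZMod p) := by
      rw [Finset.sum_const, Finset.card_univ, ZMod.card, smul_eq_mul]
  _ ≤ ∑ r : ZMod p, Ncl n k p r := Finset.sum_le_sum fun r _ => Ncl_le n k p hp hkp hb _ r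
  _ = n.choose k := hsum

/-! ### sl2-style unimodality -/

def gq (n a : ℕ) : ℚ := (a + 1 : ℚ) * ((n : ℚ) - 1 - a)

def wq (n a : ℕ) : ℚ := ∏ i ∈ Finset.range a, gq n i

def muq (n : ℕ) (A : Finset ℕ) : ℚ := ∏ a ∈ A, wq n a

lemma gq_pos {n a : ℕ} (h : a + 1 < n) : 0 < gq n a := by
  unfold gq
  have h1 : (0:ℚ) < a + 1 := by positivity
  have h2 : ((a:ℚ)) + 1 < n := by exact_mod_cast h
  nlinarith

lemma wq_pos {n a : ℕ} (h : a < n) : 0 < wq n a := by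
  unfold wq
  refine Finset.prod_pos fun i hi => gq_pos ?_
  have := Finset.mem_range.1 hi
  omega

lemma muq_pos {n : ℕ} {A : Finset ℕ} (h : A ⊆ Finset.range n) : 0 < muq n A := by
  unfold muq
  exact Finset.prod_pos fun a ha => wq_pos (Finset.mem_range.1 (h ha))

lemma wq_succ (n b : ℕ) : wq n (b + 1) = wq n b * gq n b := Finset.prod_range_succ _ _

/-- move up -/
def mup (a : ℕ) (A : Finset ℕ) : Finset ℕ := insert (a + 1) (A.erase a)

/-- move down -/
def mdn (b : ℕ) (B : Finset ℕ) : Finset ℕ := insert (b - 1) (B.erase b)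

/-- legal up moves -/
def upl (n : ℕ) (A : Finset ℕ) : Finset ℕ := A.filter fun a => a + 1 ∉ A ∧ a + 1 < n

/-- legal down moves -/
def dnl (B : Finset ℕ) : Finset ℕ := B.filter fun b => 1 ≤ b ∧ b - 1 ∉ B

def Eop (x : Finset ℕ → ℚ) (B : Finset ℕ) : ℚ := ∑ b ∈ dnl B, x (mdn b B)

def Fop (n : ℕ) (y : Finset ℕ → ℚ) (A : Finset ℕ) : ℚ :=
  ∑ a ∈ upl n A, gq n a * y (mup a A)

def Lv (n k m : ℕ) : Finset (Finset ℕ) := (pc n k).filter fun A => WW A = m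

def Sm (n k m : ℕ) (x y : Finset ℕ → ℚ) : ℚ := ∑ A ∈ Lv n k m, muq n A * (x A * y A)

lemma mem_upl {n : ℕ} {A : Finset ℕ} {a : ℕ} :
    a ∈ upl n A ↔ a ∈ A ∧ a + 1 ∉ A ∧ a + 1 < n := by
  unfold upl; rw [Finset.mem_filter]

lemma mem_dnl {B : Finset ℕ} {b : ℕ} :
    b ∈ dnl B ↔ b ∈ B ∧ 1 ≤ b ∧ b - 1 ∉ B := by
  unfold dnl; rw [Finset.mem_filter]

lemma succ_not_mem_erase {a : ℕ} {A : Finset ℕ} (ha1 : a + 1 ∉ A) :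
    a + 1 ∉ A.erase a := fun h => ha1 (Finset.mem_of_mem_erase h)

lemma pred_not_mem_erase {b : ℕ} {B : Finset ℕ} (hb2 : b - 1 ∉ B) :
    b - 1 ∉ B.erase b := fun h => hb2 (Finset.mem_of_mem_erase h)

lemma mdn_mup {a : ℕ} {A : Finset ℕ} (ha : a ∈ A) (ha1 : a + 1 ∉ A) :
    mdn (a + 1) (mup a A) = A := by
  unfold mdn mup
  have h1 : a + 1 - 1 = a := by omega
  rw [h1, Finset.erase_insert (succ_not_mem_erase ha1)]
  exact Finset.insert_erase ha

lemma mup_mdn {b : ℕ} {B : Finset ℕ} (hb : b ∈ B) (hb1 : 1 ≤ b) (hb2 : b - 1 ∉ B) :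
    mup (b - 1) (mdn b B) = B := by
  unfold mdn mup
  have h1 : b - 1 + 1 = b := by omega
  rw [h1, Finset.erase_insert (pred_not_mem_erase hb2)]
  exact Finset.insert_erase hb

lemma mup_pc {n k a : ℕ} {A : Finset ℕ} (hA : A ∈ pc n k) (ha : a ∈ A)
    (ha1 : a + 1 ∉ A) (ha2 : a + 1 < n) : mup a A ∈ pc n k := by
  obtain ⟨hsub, hcard⟩ := mem_pc.1 hA
  refine mem_pc.2 ⟨?_, ?_⟩
  · intro x hx
    rcases Finset.mem_insert.1 hx with rfl | hx'
    · exact Finset.mem_range.2 ha2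
    · exact hsub (Finset.mem_of_mem_erase hx')
  · unfold mup
    rw [Finset.card_insert_of_notMem (succ_not_mem_erase ha1),
      Finset.card_erase_of_mem ha]
    have := Finset.card_pos.2 ⟨a, ha⟩
    omega

lemma mdn_pc {n k b : ℕ} {B : Finset ℕ} (hB : B ∈ pc n k) (hb : b ∈ B)
    (hb1 : 1 ≤ b) (hb2 : b - 1 ∉ B) : mdn b B ∈ pc n k := by
  obtain ⟨hsub, hcard⟩ := mem_pc.1 hB
  refine mem_pc.2 ⟨?_, ?_⟩
  · intro x hx
    rcases Finset.mem_insert.1 hx with rfl | hx'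
    · have := Finset.mem_range.1 (hsub hb); exact Finset.mem_range.2 (by omega)
    · exact hsub (Finset.mem_of_mem_erase hx')
  · unfold mdn
    rw [Finset.card_insert_of_notMem (pred_not_mem_erase hb2),
      Finset.card_erase_of_mem hb]
    have := Finset.card_pos.2 ⟨b, hb⟩
    omega

lemma WW_mup {a : ℕ} {A : Finset ℕ} (ha : a ∈ A) (ha1 : a + 1 ∉ A) :
    WW (mup a A) = WW A + 1 := by
  unfold WW mup
  rw [Finset.sum_insert (succ_not_mem_erase ha1)]
  have h2 := Finset.sum_erase_add A id ha
  have h3 : id a ≤ ∑ x ∈ A, id x := Finset.single_le_sum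
    (fun i _ => Nat.zero_le (id i)) ha
  simp only [id_eq] at h2 h3
  omega

lemma WW_mdn {b : ℕ} {B : Finset ℕ} (hb : b ∈ B) (hb1 : 1 ≤ b) (hb2 : b - 1 ∉ B) :
    WW (mdn b B) + 1 = WW B := by
  unfold WW mdn
  rw [Finset.sum_insert (pred_not_mem_erase hb2)]
  have h2 := Finset.sum_erase_add B id hb
  have h3 : id b ≤ ∑ x ∈ B, id x := Finset.single_le_sum
    (fun i _ => Nat.zero_le (id i)) hb
  simp only [id_eq] at h2 h3
  omega

lemma muq_insert {n c : ℕ} {S : Finset ℕ} (h : c ∉ S) :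
    muq n (insert c S) = wq n c * muq n S := Finset.prod_insert h

lemma muq_mdn {n b : ℕ} {B : Finset ℕ} (hb : b ∈ B) (hb1 : 1 ≤ b) (hb2 : b - 1 ∉ B) :
    muq n B = gq n (b - 1) * muq n (mdn b B) := by
  have h1 : muq n B = wq n b * muq n (B.erase b) := by
    unfold muq
    rw [← Finset.prod_erase_mul B _ hb]
    ring
  have h2 : muq n (mdn b B) = wq n (b - 1) * muq n (B.erase b) :=
    muq_insert (pred_not_mem_erase hb2)
  have h3 : wq n b = wq n (b - 1) * gq n (b - 1) := by
    have hb' : b = (b - 1) + 1 := by omega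
    conv_lhs => rw [hb']
    rw [wq_succ]
  rw [h1, h2, h3]
  ring

lemma b_not_mem_mdn {b : ℕ} {B : Finset ℕ} (hb1 : 1 ≤ b) : b ∉ mdn b B := by
  unfold mdn
  simp only [Finset.mem_insert, Finset.mem_erase]
  push_neg
  exact ⟨by omega, fun h => absurd rfl h⟩

lemma a_not_mem_mup {a : ℕ} {A : Finset ℕ} : a ∉ mup a A := by
  unfold mup
  simp only [Finset.mem_insert, Finset.mem_erase]
  push_neg
  exact ⟨by omega, fun h => absurd rfl h⟩

/-- adjointness -/
lemma adj (n k m : ℕ) (x y : Finset ℕ → ℚ) :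
    Sm n k (m + 1) (Eop x) y = Sm n k m x (Fop n y) := by
  unfold Sm Eop Fop
  rw [show (∑ B ∈ Lv n k (m+1), muq n B * ((∑ b ∈ dnl B, x (mdn b B)) * y B))
      = ∑ B ∈ Lv n k (m+1), ∑ b ∈ dnl B, muq n B * (x (mdn b B) * y B) from
    Finset.sum_congr rfl fun B _ => by
      rw [Finset.sum_mul, Finset.mul_sum]]
  rw [show (∑ A ∈ Lv n k m, muq n A * (x A * (∑ a ∈ upl n A, gq n a * y (mup a A))))
      = ∑ A ∈ Lv n k m, ∑ a ∈ upl n A, muq n A * (x A * (gq n a * y (mup a A))) from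
    Finset.sum_congr rfl fun A _ => by
      rw [Finset.mul_sum, Finset.mul_sum]]
  rw [Finset.sum_sigma' (Lv n k (m+1)) (fun B => dnl B)
    (fun B b => muq n B * (x (mdn b B) * y B))]
  rw [Finset.sum_sigma' (Lv n k m) (fun A => upl n A)
    (fun A a => muq n A * (x A * (gq n a * y (mup a A))))]
  refine Finset.sum_nbij' (fun z => ⟨mdn z.2 z.1, z.2 - 1⟩)
    (fun z => ⟨mup z.2 z.1, z.2 + 1⟩) ?_ ?_ ?_ ?_ ?_
  · rintro ⟨B, b⟩ hz
    simp only [Finset.mem_sigma] at hz ⊢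
    obtain ⟨hB, hb⟩ := hz
    obtain ⟨hB1, hB2⟩ := Finset.mem_filter.1 hB
    obtain ⟨hbB, hb1, hb2⟩ := mem_dnl.1 hb
    have h1 : b - 1 + 1 = b := by omega
    constructor
    · refine Finset.mem_filter.2 ⟨mdn_pc hB1 hbB hb1 hb2, ?_⟩
      have := WW_mdn hbB hb1 hb2
      omega
    · refine mem_upl.2 ⟨Finset.mem_insert_self _ _, ?_, ?_⟩
      · rw [h1]; exact b_not_mem_mdn hb1
      · rw [h1]; exact Finset.mem_range.1 ((mem_pc.1 hB1).1 hbB)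
  · rintro ⟨A, a⟩ hz
    simp only [Finset.mem_sigma] at hz ⊢
    obtain ⟨hA, ha⟩ := hz
    obtain ⟨hA1, hA2⟩ := Finset.mem_filter.1 hA
    obtain ⟨haA, ha1, ha2⟩ := mem_upl.1 ha
    have h1 : a + 1 - 1 = a := by omega
    constructor
    · refine Finset.mem_filter.2 ⟨mup_pc hA1 haA ha1 ha2, ?_⟩
      have := WW_mup haA ha1
      omega
    · refine mem_dnl.2 ⟨Finset.mem_insert_self _ _, by omega, ?_⟩
      rw [h1]; exact a_not_mem_mup
  · rintro ⟨B, b⟩ hz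
    simp only [Finset.mem_sigma] at hz
    obtain ⟨hB, hb⟩ := hz
    obtain ⟨hbB, hb1, hb2⟩ := mem_dnl.1 hb
    have h1 : b - 1 + 1 = b := by omega
    show (⟨mup (b-1) (mdn b B), (b-1) + 1⟩ : (_ : Finset ℕ) × ℕ) = ⟨B, b⟩
    rw [mup_mdn hbB hb1 hb2, h1]
  · rintro ⟨A, a⟩ hz
    simp only [Finset.mem_sigma] at hz
    obtain ⟨hA, ha⟩ := hz
    obtain ⟨haA, ha1, ha2⟩ := mem_upl.1 ha
    have h1 : a + 1 - 1 = a := by omega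
    show (⟨mdn (a+1) (mup a A), (a+1) - 1⟩ : (_ : Finset ℕ) × ℕ) = ⟨A, a⟩
    rw [mdn_mup haA ha1, h1]
  · rintro ⟨B, b⟩ hz
    simp only [Finset.mem_sigma] at hz
    obtain ⟨hB, hb⟩ := hz
    obtain ⟨hbB, hb1, hb2⟩ := mem_dnl.1 hb
    have h1 : b - 1 + 1 = b := by omega
    show muq n B * (x (mdn b B) * y B)
      = muq n (mdn b B) * (x (mdn b B) * (gq n (b-1) * y (mup (b-1) (mdn b B))))
    rw [mup_mdn hbB hb1 hb2, muq_mdn (n := n) hbB hb1 hb2]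
    ring

/-- the two-move commutation of sets -/
lemma mdn_mup_comm {n a b : ℕ} {A : Finset ℕ} (ha : a ∈ A) (ha1 : a + 1 ∉ A)
    (hb : b ∈ A) (hba : b ≠ a) (hb1 : 1 ≤ b) (hb2 : b - 1 ∉ A) (hb3 : b - 1 ≠ a + 1)
    (hn : a + 1 < n) :
    mdn b (mup a A) = mup a (mdn b A) := by
  have hab1 : b ≠ a + 1 := fun h => ha1 (h ▸ hb)
  have hba1 : b - 1 ≠ a := fun h => hab1 (by omega)
  unfold mdn mup
  ext c
  simp only [Finset.mem_insert, Finset.mem_erase]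
  constructor
  · rintro (rfl | ⟨hcb, (rfl | ⟨hca, hcA⟩)⟩)
    · exact Or.inr ⟨hba1, Or.inl rfl⟩
    · exact Or.inl rfl
    · exact Or.inr ⟨hca, Or.inr ⟨hcb, hcA⟩⟩
  · rintro (rfl | ⟨hca, (rfl | ⟨hcb, hcA⟩)⟩)
    · exact Or.inr ⟨Ne.symm hab1, Or.inl rfl⟩
    · exact Or.inl rfl
    · exact Or.inr ⟨hcb, Or.inr ⟨hca, hcA⟩⟩

/-- diagonal identity -/
lemma diag_id (n : ℕ) (A : Finset ℕ) (hA : A ⊆ Finset.range n) :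
    (∑ a ∈ upl n A, gq n a) - (∑ b ∈ dnl A, gq n (b - 1))
      = ∑ a ∈ A, ((n : ℚ) - 1 - 2 * a) := by
  classical
  have hlt : ∀ a ∈ A, a < n := fun a ha => Finset.mem_range.1 (hA ha)
  -- dq b = b * (n - b)
  set dq : ℕ → ℚ := fun b => (b : ℚ) * ((n : ℚ) - b) with hdq
  have hgq_dq : ∀ b : ℕ, 1 ≤ b → gq n (b - 1) = dq b := by
    intro b hb
    unfold gq
    rw [hdq]
    have h1 : ((b - 1 : ℕ) : ℚ) = (b : ℚ) - 1 := by
      rw [Nat.cast_sub hb]; norm_num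
    rw [h1]
    ring
  have s1 : ∑ a ∈ upl n A, gq n a = ∑ a ∈ A.filter (fun a => a + 1 ∉ A), gq n a := by
    refine Finset.sum_subset ?_ ?_
    · intro a ha
      obtain ⟨h1, h2, h3⟩ := mem_upl.1 ha
      exact Finset.mem_filter.2 ⟨h1, h2⟩
    · intro a ha ha'
      obtain ⟨h1, h2⟩ := Finset.mem_filter.1 ha
      have h3 : ¬ (a + 1 < n) := fun h => ha' (mem_upl.2 ⟨h1, h2, h⟩)
      have h4 : a = n - 1 := by have := hlt a h1; omega
      unfold gq
      have h5 : ((n - 1 : ℕ) : ℚ) = (n : ℚ) - 1 := by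
        rw [Nat.cast_sub (by have := hlt a h1; omega)]; norm_num
      rw [h4, h5]
      ring
  have s2 : dnl A = A.filter (fun b => b - 1 ∉ A) := by
    refine Finset.filter_congr ?_
    intro b hb
    constructor
    · rintro ⟨_, h⟩; exact h
    · intro h
      refine ⟨?_, h⟩
      by_contra h1
      have hb0 : b = 0 := by omega
      subst hb0
      simp only [Nat.zero_sub] at h
      exact h hb
  have s3 : ∑ b ∈ dnl A, gq n (b - 1) = ∑ b ∈ A.filter (fun b => b - 1 ∉ A), dq b := by
    rw [Finset.sum_congr rfl (fun b hb => hgq_dq b (mem_dnl.1 hb).2.1), s2]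
  rw [s1, s3]
  have split1 : ∑ a ∈ A.filter (fun a => a + 1 ∉ A), gq n a
      = ∑ a ∈ A, gq n a - ∑ a ∈ A.filter (fun a => a + 1 ∈ A), gq n a := by
    have := Finset.sum_filter_add_sum_filter_not A (fun a => a + 1 ∈ A) (gq n)
    linarith
  have split2 : ∑ b ∈ A.filter (fun b => b - 1 ∉ A), dq b
      = ∑ b ∈ A, dq b - ∑ b ∈ A.filter (fun b => b - 1 ∈ A), dq b := by
    have := Finset.sum_filter_add_sum_filter_not A (fun b => b - 1 ∈ A) dq
    linarith
  have cancel : ∑ a ∈ A.filter (fun a => a + 1 ∈ A), gq n a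
      = ∑ b ∈ A.filter (fun b => b - 1 ∈ A), dq b := by
    have e1 : ∑ b ∈ A.filter (fun b => b - 1 ∈ A), dq b
        = ∑ b ∈ A.filter (fun b => b - 1 ∈ A ∧ 1 ≤ b), dq b := by
      symm
      refine Finset.sum_subset ?_ ?_
      · intro b hb
        obtain ⟨h1, h2, _⟩ := Finset.mem_filter.1 hb
        exact Finset.mem_filter.2 ⟨h1, h2⟩
      · intro b hb hb'
        obtain ⟨h1, h2⟩ := Finset.mem_filter.1 hb
        have hb0 : b = 0 := by
          by_contra h
          exact hb' (Finset.mem_filter.2 ⟨h1, h2, by omega⟩)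
        rw [hb0, hdq]
        norm_num
    rw [e1]
    refine Finset.sum_nbij' (fun a => a + 1) (fun b => b - 1) ?_ ?_ ?_ ?_ ?_
    · intro a ha
      obtain ⟨h1, h2⟩ := Finset.mem_filter.1 ha
      refine Finset.mem_filter.2 ⟨h2, ?_, by simp⟩
      simpa using h1
    · intro b hb
      obtain ⟨h1, h2, h3⟩ := Finset.mem_filter.1 hb
      refine Finset.mem_filter.2 ⟨h2, ?_⟩
      have : b - 1 + 1 = b := by omega
      rw [this]
      exact h1
    · intro a _
      show a + 1 - 1 = a
      omega
    · intro b hb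
      obtain ⟨_, _, h3⟩ := Finset.mem_filter.1 hb
      show b - 1 + 1 = b
      omega
    · intro a _
      show gq n a = dq (a + 1)
      unfold gq
      rw [hdq]
      push_cast
      ring
  rw [split1, split2, cancel]
  have final : ∑ a ∈ A, gq n a - ∑ a ∈ A, dq a = ∑ a ∈ A, ((n:ℚ) - 1 - 2*a) := by
    rw [← Finset.sum_sub_distrib]
    refine Finset.sum_congr rfl fun a _ => ?_
    unfold gq
    rw [hdq]
    ring
  linarith [final]
/-- canonical indexing set for the cross terms -/
def Scross (n : ℕ) (A : Finset ℕ) : Finset (ℕ × ℕ) :=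
  (A ×ˢ A).filter fun q =>
    q.1 + 1 ∉ A ∧ q.1 + 1 < n ∧ q.2 ≠ q.1 ∧ 1 ≤ q.2 ∧ q.2 - 1 ∉ A ∧ q.2 - 1 ≠ q.1 + 1

lemma mem_Scross {n : ℕ} {A : Finset ℕ} {a b : ℕ} :
    (a, b) ∈ Scross n A ↔ a ∈ A ∧ b ∈ A ∧ a + 1 ∉ A ∧ a + 1 < n ∧ b ≠ a ∧ 1 ≤ b
      ∧ b - 1 ∉ A ∧ b - 1 ≠ a + 1 := by
  unfold Scross
  rw [Finset.mem_filter, Finset.mem_product]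
  tauto

lemma cross_mem_FE {n : ℕ} {A : Finset ℕ} {a b : ℕ} :
    (a ∈ upl n A ∧ b ∈ (dnl (mup a A)).erase (a + 1)) ↔ (a, b) ∈ Scross n A := by
  rw [mem_Scross]
  constructor
  · rintro ⟨ha, hb⟩
    obtain ⟨haA, ha1, ha2⟩ := mem_upl.1 ha
    obtain ⟨hbne, hb'⟩ := Finset.mem_erase.1 hb
    obtain ⟨hbm, hb1, hb2⟩ := mem_dnl.1 hb'
    have hbA : b ∈ A ∧ b ≠ a := by
      rcases Finset.mem_insert.1 hbm with h | h
      · exact absurd h hbne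
      · exact ⟨Finset.mem_of_mem_erase h, (Finset.mem_erase.1 h).1⟩
    have hbm1 : b - 1 ∉ A := by
      intro h
      apply hb2
      have hba : b - 1 ≠ a := by
        intro h'
        exact hbne (by omega)
      exact Finset.mem_insert.2 (Or.inr (Finset.mem_erase.2 ⟨hba, h⟩))
    have hbm2 : b - 1 ≠ a + 1 := by
      intro h
      exact hb2 (h ▸ Finset.mem_insert_self _ _)
    exact ⟨haA, hbA.1, ha1, ha2, hbA.2, hb1, hbm1, hbm2⟩
  · rintro ⟨haA, hbA, ha1, ha2, hba, hb1, hb2, hb3⟩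
    refine ⟨mem_upl.2 ⟨haA, ha1, ha2⟩, Finset.mem_erase.2 ⟨?_, ?_⟩⟩
    · intro h
      exact ha1 (h ▸ hbA)
    · refine mem_dnl.2 ⟨Finset.mem_insert.2 (Or.inr (Finset.mem_erase.2 ⟨hba, hbA⟩)),
        hb1, ?_⟩
      intro h
      rcases Finset.mem_insert.1 h with h' | h'
      · exact hb3 h'
      · exact hb2 (Finset.mem_of_mem_erase h')

lemma cross_mem_EF {n : ℕ} {A : Finset ℕ} {a b : ℕ} :
    (b ∈ dnl A ∧ a ∈ (upl n (mdn b A)).erase (b - 1)) ↔ (a, b) ∈ Scross n A := by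
  rw [mem_Scross]
  constructor
  · rintro ⟨hb, ha⟩
    obtain ⟨hbA, hb1, hb2⟩ := mem_dnl.1 hb
    obtain ⟨hane, ha'⟩ := Finset.mem_erase.1 ha
    obtain ⟨haM, ha1, ha2⟩ := mem_upl.1 ha'
    have haA : a ∈ A ∧ a ≠ b := by
      rcases Finset.mem_insert.1 haM with h | h
      · exact absurd h hane
      · exact ⟨Finset.mem_of_mem_erase h, (Finset.mem_erase.1 h).1⟩
    have hna1 : a + 1 ∉ A := by
      intro h
      apply ha1
      have hab : a + 1 ≠ b := by
        intro h'
        exact hane (by omega)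
      exact Finset.mem_insert.2 (Or.inr (Finset.mem_erase.2 ⟨hab, h⟩))
    have hb3 : b - 1 ≠ a + 1 := by
      intro h
      exact ha1 (h ▸ Finset.mem_insert_self _ _)
    exact ⟨haA.1, hbA, hna1, ha2, fun h => haA.2 h.symm, hb1, hb2, hb3⟩
  · rintro ⟨haA, hbA, ha1, ha2, hba, hb1, hb2, hb3⟩
    refine ⟨mem_dnl.2 ⟨hbA, hb1, hb2⟩, Finset.mem_erase.2 ⟨?_, ?_⟩⟩
    · intro h
      exact hb2 (h ▸ haA)
    · refine mem_upl.2 ⟨Finset.mem_insert.2 (Or.inr (Finset.mem_erase.2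
        ⟨fun h => hba h.symm, haA⟩)), ?_, ha2⟩
      intro h
      rcases Finset.mem_insert.1 h with h' | h'
      · exact hb3 h'.symm
      · exact ha1 (Finset.mem_of_mem_erase h')

/-- the commutator identity -/
lemma commutator (n : ℕ) (x : Finset ℕ → ℚ) (A : Finset ℕ) (hA : A ⊆ Finset.range n) :
    Fop n (Eop x) A - Eop (Fop n x) A = (∑ a ∈ A, ((n : ℚ) - 1 - 2 * a)) * x A := by
  classical
  have hFE : Fop n (Eop x) A
      = (∑ a ∈ upl n A, gq n a) * x A
        + ∑ q ∈ Scross n A, gq n q.1 * x (mdn q.2 (mup q.1 A)) := by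
    unfold Fop
    have expand : ∀ a ∈ upl n A, gq n a * Eop x (mup a A)
        = gq n a * x A
          + ∑ b ∈ (dnl (mup a A)).erase (a + 1), gq n a * x (mdn b (mup a A)) := by
      intro a ha
      obtain ⟨haA, ha1, ha2⟩ := mem_upl.1 ha
      have hmem : a + 1 ∈ dnl (mup a A) := by
        refine mem_dnl.2 ⟨Finset.mem_insert_self _ _, by omega, ?_⟩
        have h1 : a + 1 - 1 = a := by omega
        rw [h1]
        exact a_not_mem_mup
      unfold Eop
      rw [← Finset.add_sum_erase _ _ hmem, mdn_mup haA ha1, mul_add, Finset.mul_sum]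
    rw [Finset.sum_congr rfl expand, Finset.sum_add_distrib, ← Finset.sum_mul]
    congr 1
    rw [Finset.sum_sigma' (upl n A) (fun a => (dnl (mup a A)).erase (a + 1))
      (fun a b => gq n a * x (mdn b (mup a A)))]
    refine Finset.sum_nbij' (fun z => (z.1, z.2)) (fun q => (⟨q.1, q.2⟩ : (_ : ℕ) × ℕ))
      ?_ ?_ ?_ ?_ ?_
    · rintro ⟨a, b⟩ hz
      rw [Finset.mem_sigma] at hz
      exact cross_mem_FE.1 hz
    · rintro ⟨a, b⟩ hq
      rw [Finset.mem_sigma]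
      exact cross_mem_FE.2 hq
    · rintro ⟨a, b⟩ _; rfl
    · rintro ⟨a, b⟩ _; rfl
    · rintro ⟨a, b⟩ _; rfl
  have hEF : Eop (Fop n x) A
      = (∑ b ∈ dnl A, gq n (b - 1)) * x A
        + ∑ q ∈ Scross n A, gq n q.1 * x (mdn q.2 (mup q.1 A)) := by
    unfold Eop
    have expand : ∀ b ∈ dnl A, Fop n x (mdn b A)
        = gq n (b - 1) * x A
          + ∑ a ∈ (upl n (mdn b A)).erase (b - 1), gq n a * x (mup a (mdn b A)) := by
      intro b hb
      obtain ⟨hbA, hb1, hb2⟩ := mem_dnl.1 hb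
      have hmem : b - 1 ∈ upl n (mdn b A) := by
        refine mem_upl.2 ⟨Finset.mem_insert_self _ _, ?_, ?_⟩
        · have h1 : b - 1 + 1 = b := by omega
          rw [h1]
          exact b_not_mem_mdn hb1
        · have h1 : b - 1 + 1 = b := by omega
          rw [h1]
          exact Finset.mem_range.1 (hA hbA)
      unfold Fop
      rw [← Finset.add_sum_erase _ _ hmem, mup_mdn hbA hb1 hb2]
    rw [Finset.sum_congr rfl expand, Finset.sum_add_distrib, ← Finset.sum_mul]
    congr 1
    rw [Finset.sum_sigma' (dnl A) (fun b => (upl n (mdn b A)).erase (b - 1))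
      (fun b a => gq n a * x (mup a (mdn b A)))]
    refine Finset.sum_nbij' (fun z => (z.2, z.1)) (fun q => (⟨q.2, q.1⟩ : (_ : ℕ) × ℕ))
      ?_ ?_ ?_ ?_ ?_
    · rintro ⟨b, a⟩ hz
      rw [Finset.mem_sigma] at hz
      exact cross_mem_EF.1 hz
    · rintro ⟨a, b⟩ hq
      rw [Finset.mem_sigma]
      exact cross_mem_EF.2 hq
    · rintro ⟨b, a⟩ _; rfl
    · rintro ⟨a, b⟩ _; rfl
    · rintro ⟨b, a⟩ hz
      rw [Finset.mem_sigma] at hz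
      have hq := cross_mem_EF.1 hz
      obtain ⟨haA, hbA, ha1, ha2, hba, hb1, hb2, hb3⟩ := mem_Scross.1 hq
      show gq n a * x (mup a (mdn b A)) = gq n a * x (mdn b (mup a A))
      rw [mdn_mup_comm haA ha1 hbA hba hb1 hb2 hb3 ha2]
  rw [hFE, hEF]
  have hdiag := diag_id n A hA
  have h2 : (∑ a ∈ upl n A, gq n a) * x A - (∑ b ∈ dnl A, gq n (b - 1)) * x A
      = (∑ a ∈ A, ((n : ℚ) - 1 - 2 * a)) * x A := by
    rw [← sub_mul, hdiag]
  linarith [h2]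
lemma Lv_subset_range {n k m : ℕ} {A : Finset ℕ} (hA : A ∈ Lv n k m) :
    A ⊆ Finset.range n := (mem_pc.1 (Finset.mem_filter.1 hA).1).1

lemma Sm_nonneg (n k m : ℕ) (x : Finset ℕ → ℚ) : 0 ≤ Sm n k m x x := by
  refine Finset.sum_nonneg fun A hA => ?_
  have h1 := muq_pos (Lv_subset_range hA)
  nlinarith [mul_self_nonneg (x A)]

lemma Sm_comm (n k m : ℕ) (x y : Finset ℕ → ℚ) : Sm n k m x y = Sm n k m y x :=
  Finset.sum_congr rfl fun _ _ => by ring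

lemma Eop_of_WW_zero {z : Finset ℕ → ℚ} {B : Finset ℕ} (hB : WW B = 0) :
    Eop z B = 0 := by
  unfold Eop
  have : dnl B = ∅ := by
    rw [Finset.eq_empty_iff_forall_notMem]
    intro b hb
    obtain ⟨hbB, hb1, _⟩ := mem_dnl.1 hb
    have : b ≤ WW B := Finset.single_le_sum (f := fun x => x) (fun i _ => Nat.zero_le i) hbB
    omega
  rw [this, Finset.sum_empty]

/-- extension of a function on a level by zero -/
def extend (n k m : ℕ) (x : {A // A ∈ Lv n k m} → ℚ) : Finset ℕ → ℚ :=
  fun S => if h : S ∈ Lv n k m then x ⟨S, h⟩ else 0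

lemma unimodal_W (n k m : ℕ) (hm : 2 * m < k * (n - 1)) : uW n k m ≤ uW n k (m + 1) := by
  classical
  have hn2 : 2 ≤ n := by
    rcases Nat.lt_or_ge n 2 with h | h
    · interval_cases n <;> simp_all
    · exact h
  -- the linear map
  have hext_add : ∀ x y : {A // A ∈ Lv n k m} → ℚ, ∀ S,
      extend n k m (x + y) S = extend n k m x S + extend n k m y S := by
    intro x y S
    unfold extend
    split <;> simp
  have hext_smul : ∀ (c : ℚ) (x : {A // A ∈ Lv n k m} → ℚ), ∀ S,
      extend n k m (c • x) S = c * extend n k m x S := by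
    intro c x S
    unfold extend
    split <;> simp
  let T : ({A // A ∈ Lv n k m} → ℚ) →ₗ[ℚ] ({A // A ∈ Lv n k (m + 1)} → ℚ) :=
  { toFun := fun x B => Eop (extend n k m x) B.1
    map_add' := by
      intro x y
      funext B
      show Eop (extend n k m (x + y)) B.1 = Eop (extend n k m x) B.1 + Eop (extend n k m y) B.1
      unfold Eop
      rw [← Finset.sum_add_distrib]
      exact Finset.sum_congr rfl fun b _ => hext_add x y _
    map_smul' := by
      intro c x
      funext B
      show Eop (extend n k m (c • x)) B.1 = c * Eop (extend n k m x) B.1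
      unfold Eop
      rw [Finset.mul_sum]
      exact Finset.sum_congr rfl fun b _ => hext_smul c x _ }
  have hinj : Function.Injective T := by
    rw [injective_iff_map_eq_zero]
    intro x hx0
    set xt := extend n k m x with hxt
    have hEzero : ∀ B ∈ Lv n k (m + 1), Eop xt B = 0 := by
      intro B hB
      exact congrFun hx0 ⟨B, hB⟩
    have h1 : Sm n k (m + 1) (Eop xt) (Eop xt) = 0 := by
      unfold Sm
      refine Finset.sum_eq_zero fun B hB => ?_
      rw [hEzero B hB]
      ring
    have h2 : Sm n k m xt (Fop n (Eop xt)) = 0 := by rw [← adj]; exact h1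
    -- commutator rewrite
    have hcast : ((k * (n - 1) : ℕ) : ℚ) = (k : ℚ) * ((n : ℚ) - 1) := by
      push_cast [Nat.cast_sub (by omega : 1 ≤ n)]
      ring
    set c : ℚ := (k : ℚ) * ((n : ℚ) - 1) - 2 * m with hc
    have hcpos : 0 < c := by
      rw [hc, ← hcast]
      have : (2 * m : ℚ) < ((k * (n - 1) : ℕ) : ℚ) := by exact_mod_cast hm
      push_cast at this ⊢
      linarith
    have h3 : ∀ A ∈ Lv n k m,
        Fop n (Eop xt) A = Eop (Fop n xt) A + c * xt A := by
      intro A hA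
      obtain ⟨hA1, hA2⟩ := Finset.mem_filter.1 hA
      obtain ⟨hsub, hcard⟩ := mem_pc.1 hA1
      have hcomm := commutator n xt A hsub
      have hsum : ∑ a ∈ A, ((n : ℚ) - 1 - 2 * a) = c := by
        rw [Finset.sum_sub_distrib, Finset.sum_const, hcard]
        have : ∑ a ∈ A, (2 * a : ℚ) = 2 * (WW A : ℚ) := by
          unfold WW
          push_cast
          rw [Finset.mul_sum]
        rw [this, hA2, hc]
        simp [nsmul_eq_mul]
      rw [hsum] at hcomm
      linarith [hcomm]
    have h4 : Sm n k m xt (Fop n (Eop xt))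
        = Sm n k m xt (Eop (Fop n xt)) + c * Sm n k m xt xt := by
      unfold Sm
      rw [Finset.mul_sum, ← Finset.sum_add_distrib]
      refine Finset.sum_congr rfl fun A hA => ?_
      rw [h3 A hA]
      ring
    have h5 : 0 ≤ Sm n k m xt (Eop (Fop n xt)) := by
      rcases Nat.eq_zero_or_pos m with rfl | hm1
      · have : Sm n k 0 xt (Eop (Fop n xt)) = 0 := by
          unfold Sm
          refine Finset.sum_eq_zero fun A hA => ?_
          obtain ⟨_, hA2⟩ := Finset.mem_filter.1 hA
          rw [Eop_of_WW_zero hA2]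
          ring
        rw [this]
      · obtain ⟨m', rfl⟩ : ∃ m', m = m' + 1 := ⟨m - 1, by omega⟩
        rw [Sm_comm, adj]
        exact Sm_nonneg _ _ _ _
    have h6 : Sm n k m xt xt = 0 := by
      have h7 := Sm_nonneg n k m xt
      nlinarith [h2, h4, h5]
    -- conclude x = 0
    funext A
    have h8 : ∀ B ∈ Lv n k m, muq n B * (xt B * xt B) = 0 := by
      have hnn : ∀ B ∈ Lv n k m, 0 ≤ muq n B * (xt B * xt B) := by
        intro B hB
        have := muq_pos (Lv_subset_range hB)
        nlinarith [mul_self_nonneg (xt B)]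
      exact (Finset.sum_eq_zero_iff_of_nonneg hnn).1 h6
    have h9 := h8 A.1 A.2
    have h10 := muq_pos (Lv_subset_range A.2)
    have h11 : xt A.1 = 0 := by
      rcases mul_eq_zero.1 h9 with h | h
      · exact absurd h (ne_of_gt h10)
      · exact (mul_self_eq_zero).1 h
    rw [hxt] at h11
    unfold extend at h11
    rw [dif_pos A.2] at h11
    simpa using h11
  have hrank := LinearMap.finrank_le_finrank_of_injective hinj
  rw [Module.finrank_fintype_fun_eq_card, Module.finrank_fintype_fun_eq_card,
    Fintype.card_coe, Fintype.card_coe] at hrank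
  exact hrank
lemma uu_mono_left (n k m : ℕ) (hm : 2 * m < k * (n - 1)) : uu n k m ≤ uu n k (m + 1) := by
  rw [uu_eq_uW, uu_eq_uW]
  exact unimodal_W n k m hm

lemma uu_mono_right (n k m : ℕ) (hm : k * (n - 1) ≤ 2 * m) : uu n k (m + 1) ≤ uu n k m := by
  rcases Nat.lt_or_ge m (k * (n - 1)) with h | h
  · have h1 : m + 1 ≤ k * (n - 1) := h
    have e1 : uu n k (m + 1) = uu n k (k * (n - 1) - (m + 1)) := uu_symm h1
    have e2 : uu n k m = uu n k (k * (n - 1) - m) := uu_symm (le_of_lt h)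
    have h3 : 2 * (k * (n - 1) - (m + 1)) < k * (n - 1) := by omega
    have h4 := uu_mono_left n k (k * (n - 1) - (m + 1)) h3
    have h5 : k * (n - 1) - (m + 1) + 1 = k * (n - 1) - m := by omega
    rw [e1, e2, ← h5]
    exact h4
  · rw [uu_vanish (show k * (n - 1) < m + 1 by omega)]
    exact Nat.zero_le _

/-- the difference sequence -/
def vD (n k m : ℕ) : ℤ := (uu n k m : ℤ) - (if m = 0 then 0 else (uu n k (m - 1) : ℤ))

lemma sum_vD (n k : ℕ) : ∀ t, ∑ m ∈ Finset.range (t + 1), vD n k m = uu n k t := by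
  intro t
  induction t with
  | zero => simp [vD]
  | succ t ih =>
    rw [Finset.sum_range_succ, ih]
    unfold vD
    rw [if_neg (Nat.succ_ne_zero t)]
    have : t + 1 - 1 = t := by omega
    rw [this]
    ring

lemma GS_mul_coeff (n k : ℕ) : ∀ t, ((GS n k) * (1 - X)).coeff t = vD n k t := by
  intro t
  have hexp : (GS n k) * (1 - X) = GS n k - GS n k * X := by ring
  rw [hexp, Polynomial.coeff_sub]
  cases t with
  | zero =>
    rw [Polynomial.mul_coeff_zero, Polynomial.coeff_X_zero, mul_zero]
    unfold vD
    rw [if_pos rfl, GS_coeff]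
  | succ t =>
    rw [Polynomial.coeff_mul_X]
    unfold vD
    rw [if_neg (Nat.succ_ne_zero t), GS_coeff, GS_coeff]
    have : t + 1 - 1 = t := by omega
    rw [this]

lemma P_coeff (n k : ℕ) (j : ℕ) :
    (gaussBinom n k * (1 - X)).coeff j = vD n k (j + sg k) := by
  have h1 : (gaussBinom n k * (1 - X)) * X ^ sg k = (GS n k) * (1 - X) := by
    rw [← gauss_model n k]
    ring
  have h2 := Polynomial.coeff_mul_X_pow (gaussBinom n k * (1 - X)) (sg k) j
  rw [h1, GS_mul_coeff] at h2
  exact h2.symm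

/-- key upper bound for the ℓ¹ norm -/
lemma l1_le (n k : ℕ) :
    l1normP (gaussBinom n k * (1 - X))
      ≤ 2 * (uu n k ((k * (n - 1) + 1) / 2) : ℤ) := by
  classical
  set M := k * (n - 1) with hM
  set c := (M + 1) / 2 with hc
  set σ := sg k with hσ
  have hvan : ∀ t, M + 2 ≤ t → vD n k t = 0 := by
    intro t ht
    unfold vD
    rw [if_neg (by omega), uu_vanish (show M < t by omega),
      uu_vanish (show M < t - 1 by omega)]
    ring
  have hsupp : (gaussBinom n k * (1 - X)).support ⊆ Finset.range (M + 2) := by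
    intro j hj
    rw [Finset.mem_range]
    by_contra h
    push_neg at h
    have := Polynomial.mem_support_iff.1 hj
    rw [P_coeff] at this
    exact this (hvan _ (by omega))
  have h1 : l1normP (gaussBinom n k * (1 - X))
      = ∑ j ∈ Finset.range (M + 2), |(gaussBinom n k * (1 - X)).coeff j| := by
    unfold l1normP
    refine Finset.sum_subset hsupp ?_
    intro j _ hj
    rw [Polynomial.notMem_support_iff.1 hj]
    simp
  rw [h1]
  have h2 : ∑ j ∈ Finset.range (M + 2), |(gaussBinom n k * (1 - X)).coeff j|
      = ∑ j ∈ Finset.range (M + 2), |vD n k (σ + j)| := by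
    refine Finset.sum_congr rfl fun j _ => ?_
    rw [P_coeff, add_comm]
  rw [h2]
  have h3 : ∑ j ∈ Finset.range (M + 2), |vD n k (σ + j)|
      ≤ ∑ t ∈ Finset.range (σ + (M + 2)), |vD n k t| := by
    rw [Finset.sum_range_add (fun t => |vD n k t|) σ (M + 2)]
    have : 0 ≤ ∑ t ∈ Finset.range σ, |vD n k t| :=
      Finset.sum_nonneg fun t _ => abs_nonneg _
    linarith
  refine le_trans h3 ?_
  -- signs
  have sgn1 : ∀ t, t ≤ c → 0 ≤ vD n k t := by
    intro t ht
    unfold vD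
    rcases Nat.eq_zero_or_pos t with rfl | ht1
    · rw [if_pos rfl]
      simp only [sub_zero]
      positivity
    · rw [if_neg (by omega)]
      have h4 := uu_mono_left n k (t - 1) (by omega)
      have h5 : t - 1 + 1 = t := by omega
      rw [h5] at h4
      have := h4
      simp only [sub_nonneg]
      exact_mod_cast this
  have sgn2 : ∀ t, c < t → vD n k t ≤ 0 := by
    intro t ht
    unfold vD
    rw [if_neg (by omega)]
    have h4 := uu_mono_right n k (t - 1) (by omega)
    have h5 : t - 1 + 1 = t := by omega
    rw [h5] at h4
    simp only [sub_nonpos]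
    exact_mod_cast h4
  -- split the full sum at c+1
  have hcle : c + 1 ≤ σ + (M + 2) := by omega
  rw [Finset.range_eq_Ico]
  rw [← Finset.sum_Ico_consecutive (fun t => |vD n k t|) (Nat.zero_le (c + 1)) hcle]
  have hA : ∑ t ∈ Finset.Ico 0 (c + 1), |vD n k t| = (uu n k c : ℤ) := by
    rw [← Finset.range_eq_Ico]
    rw [Finset.sum_congr rfl (fun t ht => abs_of_nonneg (sgn1 t (by
      have := Finset.mem_range.1 ht; omega)))]
    exact sum_vD n k c
  have hB : ∑ t ∈ Finset.Ico (c + 1) (σ + (M + 2)), |vD n k t| = (uu n k c : ℤ) := by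
    have e1 : ∑ t ∈ Finset.Ico (c + 1) (σ + (M + 2)), |vD n k t|
        = ∑ t ∈ Finset.Ico (c + 1) (σ + (M + 2)), (- vD n k t) := by
      refine Finset.sum_congr rfl fun t ht => abs_of_nonpos (sgn2 t ?_)
      have := (Finset.mem_Ico.1 ht).1
      omega
    rw [e1, Finset.sum_neg_distrib]
    have e2 : ∑ t ∈ Finset.Ico 0 (c + 1), vD n k t
        + ∑ t ∈ Finset.Ico (c + 1) (σ + (M + 2)), vD n k t
        = ∑ t ∈ Finset.Ico 0 (σ + (M + 2)), vD n k t :=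
      Finset.sum_Ico_consecutive _ (Nat.zero_le _) hcle
    have e3 : ∑ t ∈ Finset.Ico 0 (c + 1), vD n k t = (uu n k c : ℤ) := by
      rw [← Finset.range_eq_Ico]; exact sum_vD n k c
    have e4 : ∑ t ∈ Finset.Ico 0 (σ + (M + 2)), vD n k t = (uu n k (σ + M + 1) : ℤ) := by
      rw [← Finset.range_eq_Ico]
      have : σ + (M + 2) = (σ + M + 1) + 1 := by omega
      rw [this]
      exact sum_vD n k _
    have e5 : uu n k (σ + M + 1) = 0 := uu_vanish (by omega)
    rw [e3, e4, e5] at e2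
    push_cast at e2 ⊢
    linarith
  rw [hA, hB]
  ring_nf
  omega

end GBAux

/-- If `n ≥ 2k ≥ 2` and `p` is the largest prime factor of `C(n,k)`, then the ℓ¹-norm
of `[n choose k]_q · (1 − q)` is at most `(2/p)·C(n,k) ≤ (2/k)·C(n,k)`. -/
theorem l1norm_gaussBinom_le (n k p : ℕ) (hk : 1 ≤ k) (h2k : 2 * k ≤ n)
    (hp : p.Prime) (hdvd : p ∣ n.choose k)
    (hmax : ∀ q : ℕ, q.Prime → q ∣ n.choose k → q ≤ p) :
    (p : ℤ) * l1normP (gaussBinom n k * (1 - Polynomial.X)) ≤ 2 * (n.choose k : ℤ) ∧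
    (k : ℤ) * l1normP (gaussBinom n k * (1 - Polynomial.X)) ≤ 2 * (n.choose k : ℤ) := by
  have hkn : k ≤ n := by omega
  set c := (k * (n - 1) + 1) / 2 with hc
  have hl1 : l1normP (gaussBinom n k * (1 - Polynomial.X)) ≤ 2 * (GBAux.uu n k c : ℤ) :=
    GBAux.l1_le n k
  set u := GBAux.uu n k c with hu
  have hanti : k * u ≤ n.choose (k - 1) := GBAux.anti n k c hk
  have hCle : n.choose (k - 1) ≤ n.choose k := by
    have hhalf : k - 1 < n / 2 := by
      have : k ≤ n / 2 := (Nat.le_div_iff_mul_le (by norm_num)).2 (by omega)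
      omega
    have h := Nat.choose_le_succ_of_lt_half_left hhalf
    have e : k - 1 + 1 = k := by omega
    rwa [e] at h
  have hpart2 : k * u ≤ n.choose k := le_trans hanti hCle
  have hpart1 : p * u ≤ n.choose k := by
    rcases le_or_gt p (n - k + 1) with hp1 | hp1
    · have hid : n.choose k * k = n.choose (k - 1) * (n - k + 1) := by
        have h := Nat.choose_succ_right_eq n (k - 1)
        have e : k - 1 + 1 = k := by omega
        rw [e] at h
        have e2 : n - (k - 1) = n - k + 1 := by omega
        rw [e2] at h
        exact h
      have h2 : (n - k + 1) * (k * u) ≤ (n - k + 1) * n.choose (k - 1) :=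
        Nat.mul_le_mul_left _ hanti
      have h4 : k * ((n - k + 1) * u) ≤ k * n.choose k := by
        calc k * ((n - k + 1) * u) = (n - k + 1) * (k * u) := by ring
        _ ≤ (n - k + 1) * n.choose (k - 1) := h2
        _ = k * n.choose k := by rw [mul_comm ((n:ℕ) - k + 1), ← hid]; ring
      have h5 : (n - k + 1) * u ≤ n.choose k :=
        Nat.le_of_mul_le_mul_left h4 (by omega)
      calc p * u ≤ (n - k + 1) * u := Nat.mul_le_mul_right u hp1
      _ ≤ n.choose k := h5
    · have hpn : p ≤ n := by
        have hfac : p ∣ n.factorial := by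
          rw [← Nat.choose_mul_factorial_mul_factorial hkn]
          exact Dvd.dvd.mul_right (Dvd.dvd.mul_right hdvd _) _
        exact (Nat.Prime.dvd_factorial hp).1 hfac
      have hkp : k < p := by omega
      have hmod : n % p = n - p := by
        rw [Nat.mod_eq_sub_mod hpn]
        exact Nat.mod_eq_of_lt (by omega)
      have hb : n % p < k := by omega
      exact GBAux.equi n k p c hp hkp hb
  have hl1nonneg : (0 : ℤ) ≤ l1normP (gaussBinom n k * (1 - Polynomial.X)) := by
    unfold l1normP
    exact Finset.sum_nonneg fun j _ => abs_nonneg _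
  constructor
  · calc (p : ℤ) * l1normP (gaussBinom n k * (1 - Polynomial.X))
        ≤ (p : ℤ) * (2 * (u : ℤ)) := by
          apply mul_le_mul_of_nonneg_left hl1 (by positivity)
    _ = 2 * ((p * u : ℕ) : ℤ) := by push_cast; ring
    _ ≤ 2 * (n.choose k : ℤ) := by
          have := hpart1
          omega
  · calc (k : ℤ) * l1normP (gaussBinom n k * (1 - Polynomial.X))
        ≤ (k : ℤ) * (2 * (u : ℤ)) := by
          apply mul_le_mul_of_nonneg_left hl1 (by positivity)
    _ = 2 * ((k * u : ℕ) : ℤ) := by push_cast; ring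
    _ ≤ 2 * (n.choose k : ℤ) := by
          have := hpart2
          omega
end
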